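/- arXiv:1103.0856 — 10 statements merged into one kernel-verified Lean document; each statement's English description precedes it below -/
import Mathlib

section
/- Let r = [m_1, m_2, ..., m_k] be a continued fraction expansion of a rational number 0 < r < 1 with k ≥ 2, all m_i positive integers and m_k ≥ 2, and write m = m_1. Then every term of the sequence S(r) (the sequence of run-lengths of the exponent sign pattern of u_r) is either m or m+1. -/
/-- The exponent-letter word `u_{q/p} = a^{ε₁} b^{ε₂} ⋯ a^{ε_{2p-1}} b^{ε_{2p}}`,
encoded as a list of letters `(generator, sign)` with `true = a`, `false = b`,
and sign `true` meaning exponent `+1`.  Here (0-indexed) `ε_{j+1} = (-1)^⌊jq/p⌋`. -/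
def epsWord (p q : ℕ) : List (Bool × Bool) :=
  (List.range (2 * p)).map fun j => (decide (j % 2 = 0), decide ((j * q / p) % 2 = 0))

/-- The S-sequence of slope `q/p`: run lengths of the sign pattern `⌊jq/p⌋ mod 2`. -/
def signRuns (p q : ℕ) : List ℕ :=
  (((List.range (2 * p)).map fun j => (j * q / p) % 2).splitBy (· == ·)).map List.length

/-- The S-sequence of a rational number. -/
def SseqQ (r : ℚ) : List ℕ := signRuns r.den r.num.toNat

/-- Continued fraction `[m₁, m₂, …, m_k] = 1/(m₁ + 1/(m₂ + ⋯ + 1/m_k))`. -/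
def contFrac : List ℕ → ℚ
  | [] => 0
  | m :: l => 1 / (m + contFrac l)


namespace SproofAux

private theorem replicate_append_cons {α} (n : ℕ) (v : α) (g : List α) :
    List.replicate n v ++ v :: g = v :: (List.replicate n v ++ g) := by
  rw [← List.singleton_append, ← List.append_assoc, ← List.replicate_succ',
    List.replicate_succ, List.cons_append]

private theorem loop_eq_append {α} {r : α → α → Bool} {l : List α} {a : α} {g : List α}
    (gs : List (List α)) :
    List.splitBy.loop r l a g gs = gs.reverse ++ List.splitBy.loop r l a g [] := by
  induction l generalizing a g gs with
  | nil => simp [List.splitBy.loop]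
  | cons b l IH =>
    simp only [List.splitBy.loop]
    split
    · rw [IH gs]
    · rw [IH ((a :: g).reverse :: gs), IH [(a :: g).reverse]]
      simp

private theorem loop_replicate {α} {r : α → α → Bool} {v : α} (hr : r v v = true)
    (n : ℕ) (l : List α) (g : List α) (gs : List (List α)) :
    List.splitBy.loop r (List.replicate n v ++ l) v g gs
      = List.splitBy.loop r l v (List.replicate n v ++ g) gs := by
  induction n generalizing g with
  | zero => simp
  | succ n IH =>
    rw [List.replicate_succ, List.cons_append, List.splitBy.loop]
    split
    · rw [IH (v :: g)]
      congr 1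
      exact replicate_append_cons n v g
    · simp_all

theorem splitBy_replicate_append {α} {r : α → α → Bool} {v : α} (hr : r v v = true)
    {k : ℕ} (hk : 0 < k) (l : List α) (hl : ∀ x ∈ l.head?, r v x = false) :
    (List.replicate k v ++ l).splitBy r = List.replicate k v :: l.splitBy r := by
  obtain ⟨k, rfl⟩ := Nat.exists_eq_succ_of_ne_zero hk.ne'
  rw [List.replicate_succ, List.cons_append, List.splitBy, loop_replicate hr]
  cases l with
  | nil =>
    simp [List.splitBy.loop, List.splitBy, replicate_append_cons]
  | cons x l' =>
    have hx : r v x = false := hl x rfl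
    rw [List.splitBy.loop]
    split
    · simp_all
    · rw [loop_eq_append]
      simp only [List.append_nil, List.reverse_cons, List.reverse_replicate,
        List.reverse_nil, List.nil_append]
      rw [← List.replicate_succ', List.replicate_succ]
      rfl

theorem splitBy_flatten_blocks {α} {r : α → α → Bool} (bs : List (ℕ × α))
    (hne : ∀ b ∈ bs, 0 < b.1) (hrefl : ∀ b ∈ bs, r b.2 b.2 = true)
    (hchain : bs.Chain' fun x y => r x.2 y.2 = false) :
    ((bs.map fun b => List.replicate b.1 b.2).flatten).splitBy r
      = bs.map fun b => List.replicate b.1 b.2 := by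
  induction bs with
  | nil => simp [List.splitBy]
  | cons b bs IH =>
    simp only [List.map_cons, List.flatten_cons]
    rw [splitBy_replicate_append (hrefl b (by simp)) (hne b (by simp))]
    · rw [IH (fun x hx => hne x (by simp [hx])) (fun x hx => hrefl x (by simp [hx]))
        hchain.tail]
    · intro x hx
      cases bs with
      | nil => simp at hx
      | cons b2 bs2 =>
        have h2 : 0 < b2.1 := hne b2 (by simp)
        obtain ⟨k2, hk2⟩ := Nat.exists_eq_succ_of_ne_zero h2.ne'
        simp only [List.map_cons, List.flatten_cons, hk2, List.replicate_succ,
          List.cons_append, List.head?_cons, Option.mem_some_iff] at hx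
        subst hx
        exact (List.isChain_cons_cons.1 hchain).1

theorem map_range_eq_flatten {α} (f : ℕ → α) (g : ℕ → α) (c : ℕ → ℕ) (N : ℕ)
    (h0 : c 0 = 0) (hmono : ∀ n < N, c n ≤ c (n + 1))
    (hf : ∀ n < N, ∀ j, c n ≤ j → j < c (n + 1) → f j = g n) :
    (List.range (c N)).map f
      = ((List.range N).map fun n => List.replicate (c (n + 1) - c n) (g n)).flatten := by
  induction N with
  | zero => simp [h0]
  | succ N IH =>
    have hc : c N ≤ c (N + 1) := hmono N (Nat.lt_succ_self N)
    have : c (N + 1) = c N + (c (N + 1) - c N) := by omega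
    rw [this, List.range_add, List.map_append, List.range_succ, List.map_append,
      List.flatten_append]
    congr 1
    · exact IH (fun n hn => hmono n (by omega)) (fun n hn => hf n (by omega))
    · simp only [List.map_cons, List.map_nil, List.flatten_cons, List.flatten_nil,
        List.append_nil, List.map_map]
      rw [List.eq_replicate_iff]
      constructor
      · simp
      · intro x hx
        simp only [List.mem_map, List.mem_range, Function.comp] at hx
        obtain ⟨i, hi, rfl⟩ := hx
        exact hf N (Nat.lt_succ_self N) (c N + i) (Nat.le_add_right _ _) (by omega)


/-- ceiling of `n*p/q` in naturals -/
def cfun (p q n : ℕ) : ℕ := (n * p + (q - 1)) / q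

theorem cfun_lb (p q n : ℕ) (hq : 0 < q) : n * p ≤ cfun p q n * q := by
  have h : n * p + (q - 1) < cfun p q n * q + q := Nat.lt_div_mul_add hq
  generalize cfun p q n * q = A at h ⊢
  generalize n * p = B at h ⊢
  omega

theorem cfun_ub (p q n : ℕ) (hq : 0 < q) : cfun p q n * q < n * p + q := by
  have h : cfun p q n * q ≤ n * p + (q - 1) := Nat.div_mul_le_self _ _
  generalize cfun p q n * q = A at h ⊢
  generalize n * p = B at h ⊢
  omega

theorem cfun_low (p q m n : ℕ) (hq : 0 < q) (h1 : m * q < p) :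
    cfun p q n + m ≤ cfun p q (n + 1) := by
  have ha := cfun_ub p q n hq
  have hb := cfun_lb p q (n + 1) hq
  have key : (cfun p q n + m) * q < (cfun p q (n + 1) + 1) * q := by
    have e1 : (cfun p q n + m) * q = cfun p q n * q + m * q := by ring
    have e2 : (cfun p q (n + 1) + 1) * q = cfun p q (n + 1) * q + q := by ring
    have e3 : (n + 1) * p = n * p + p := by ring
    rw [e1, e2]
    rw [e3] at hb
    generalize cfun p q n * q = A at *
    generalize cfun p q (n + 1) * q = B at *
    generalize n * p = C at *
    generalize m * q = D at *
    omega
  exact Nat.le_of_lt_succ (Nat.lt_of_mul_lt_mul_right key)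

theorem cfun_high (p q m n : ℕ) (hq : 0 < q) (h2 : p < (m + 1) * q) :
    cfun p q (n + 1) ≤ cfun p q n + m + 1 := by
  have ha := cfun_lb p q n hq
  have hb := cfun_ub p q (n + 1) hq
  have key : cfun p q (n + 1) * q < (cfun p q n + m + 2) * q := by
    have e1 : (cfun p q n + m + 2) * q = cfun p q n * q + (m + 1) * q + q := by ring
    have e3 : (n + 1) * p = n * p + p := by ring
    rw [e1]
    rw [e3] at hb
    generalize cfun p q n * q = A at *
    generalize cfun p q (n + 1) * q = B at *
    generalize n * p = C at *
    generalize (m + 1) * q = D at *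
    omega
  have := Nat.lt_of_mul_lt_mul_right key
  omega

theorem cfun_zero (p q : ℕ) (hq : 0 < q) : cfun p q 0 = 0 := by
  simp only [cfun, Nat.zero_mul, Nat.zero_add]
  exact Nat.div_eq_of_lt (by omega)

theorem cfun_top (p q : ℕ) (hq : 0 < q) : cfun p q (2 * q) = 2 * p := by
  have h : 2 * q * p + (q - 1) = (q - 1) + (2 * p) * q := by
    have : 2 * q * p = 2 * p * q := by ring
    omega
  simp only [cfun, h, Nat.add_mul_div_right _ _ hq,
    Nat.div_eq_of_lt (show q - 1 < q by omega), Nat.zero_add]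

theorem signRuns_mem (p q m : ℕ) (hm : 0 < m) (hq : 0 < q)
    (h1 : m * q < p) (h2 : p < (m + 1) * q) :
    ∀ t ∈ (((List.range (2 * p)).map fun j => (j * q / p) % 2).splitBy (· == ·)).map
      List.length, t = m ∨ t = m + 1 := by
  have hp : 0 < p := lt_of_le_of_lt (Nat.zero_le _) h1
  have hf : ∀ n, n < 2 * q → ∀ j, cfun p q n ≤ j → j < cfun p q (n + 1) →
      (j * q / p) % 2 = n % 2 := by
    intro n _ j hj1 hj2
    have e1 : n * p ≤ j * q := le_trans (cfun_lb p q n hq) (Nat.mul_le_mul_right q hj1)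
    have e2 : j * q < (n + 1) * p := by
      have h3 : (j + 1) * q ≤ cfun p q (n + 1) * q := Nat.mul_le_mul_right q hj2
      have h4 := cfun_ub p q (n + 1) hq
      have e4 : (j + 1) * q = j * q + q := by ring
      rw [e4] at h3
      generalize cfun p q (n + 1) * q = A at *
      generalize j * q = B at *
      generalize (n + 1) * p = C at *
      omega
    rw [Nat.div_eq_of_lt_le e1 e2]
  have hlist : (List.range (2 * p)).map (fun j => (j * q / p) % 2)
      = (((List.range (2 * q)).map fun n => (cfun p q (n + 1) - cfun p q n, n % 2)).map
          fun b => List.replicate b.1 b.2).flatten := by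
    rw [List.map_map, ← cfun_top p q hq]
    exact map_range_eq_flatten _ (fun n => n % 2) (cfun p q) (2 * q) (cfun_zero p q hq)
      (fun n _ => le_trans (by omega) (cfun_low p q m n hq h1)) hf
  rw [hlist, splitBy_flatten_blocks]
  · intro t ht
    simp only [List.map_map, List.mem_map, List.mem_range, Function.comp] at ht
    obtain ⟨n, _, rfl⟩ := ht
    simp only [List.length_replicate]
    have := cfun_low p q m n hq h1
    have := cfun_high p q m n hq h2
    omega
  · intro b hb
    simp only [List.mem_map, List.mem_range] at hb
    obtain ⟨n, _, rfl⟩ := hb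
    have := cfun_low p q m n hq h1
    omega
  · intro b hb
    simp only [List.mem_map] at hb
    obtain ⟨n, _, rfl⟩ := hb
    simp
  · show List.IsChain _ _; rw [List.isChain_map]
    rcases Nat.exists_eq_succ_of_ne_zero (show 2 * q ≠ 0 by omega) with ⟨N, hN⟩
    rw [hN, List.isChain_range_succ]
    intro k _
    simp only
    rw [beq_eq_false_iff_ne]
    omega


theorem contFrac_pos_lt_one : ∀ L : List ℕ, L ≠ [] → (∀ x ∈ L, 0 < x) →
    (∀ x ∈ L.getLast?, 2 ≤ x) → 0 < contFrac L ∧ contFrac L < 1 := by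
  intro L
  induction L with
  | nil => intro h; exact absurd rfl h
  | cons a l IH =>
    intro _ hpos hlast
    cases l with
    | nil =>
      have ha : 2 ≤ a := hlast a (by simp)
      have ha' : (2 : ℚ) ≤ (a : ℚ) := by exact_mod_cast ha
      simp only [contFrac, add_zero]
      constructor
      · rw [one_div, inv_pos]; linarith
      · rw [div_lt_one (by linarith)]; linarith
    | cons b l' =>
      have hx := IH (by simp) (fun x hx => hpos x (by simp [hx]))
        (by rw [← List.getLast?_cons_cons (a := a)]; exact hlast)
      have ha : 1 ≤ a := hpos a (by simp)
      have ha' : (1 : ℚ) ≤ (a : ℚ) := by exact_mod_cast ha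
      simp only [contFrac] at hx ⊢
      constructor
      · rw [one_div, inv_pos]; linarith [hx.1]
      · rw [div_lt_one (by linarith [hx.1])]; linarith [hx.1]

end SproofAux

/-- for `r = [m₁,…,m_k]` with `k ≥ 2`, all `mᵢ > 0`, `m_k ≥ 2`,
every term of `S(r)` is `m₁` or `m₁ + 1`. -/
theorem Sseq_terms_m_or_succ (L : List ℕ) (hk : 2 ≤ L.length) (hpos : ∀ x ∈ L, 0 < x)
    (hlast : ∀ x ∈ L.getLast?, 2 ≤ x) (r : ℚ) (hr : r = contFrac L)
    (h0 : 0 < r) (h1 : r < 1) :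
    ∀ t ∈ SseqQ r, t = L.headI ∨ t = L.headI + 1 := by
  obtain ⟨m, L', rfl⟩ : ∃ m L', L = m :: L' := by
    cases L with
    | nil => simp at hk
    | cons a t => exact ⟨a, t, rfl⟩
  have hL' : L' ≠ [] := by
    intro h; subst h; simp at hk
  have hx := SproofAux.contFrac_pos_lt_one L' hL'
    (fun x hx => hpos x (List.mem_cons_of_mem _ hx))
    (by
      intro y hy
      apply hlast
      cases L' with
      | nil => exact absurd rfl hL'
      | cons b t => rw [List.getLast?_cons_cons]; exact hy)
  have hm : 0 < m := hpos m (by simp)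
  have hm' : (1 : ℚ) ≤ (m : ℚ) := by exact_mod_cast hm
  have hrr : r = 1 / ((m : ℚ) + contFrac L') := by rw [hr]; rfl
  have hmx : (0 : ℚ) < (m : ℚ) + contFrac L' := by linarith [hx.1]
  have hinv : ((r.den : ℚ) / (r.num : ℚ)) = (m : ℚ) + contFrac L' := by
    have h2 : 1 / r = (r.den : ℚ) / (r.num : ℚ) := by
      conv_lhs => rw [← Rat.num_div_den r]
      rw [one_div_div]
    rw [← h2, hrr, one_div_one_div]
  have hnum : (0 : ℤ) < r.num := Rat.num_pos.2 h0
  set q : ℕ := r.num.toNat with hqdef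
  have hq : 0 < q := by omega
  have hqcast : ((q : ℕ) : ℚ) = ((r.num : ℤ) : ℚ) := by
    rw [hqdef]
    exact_mod_cast congrArg (fun z : ℤ => (z : ℚ)) (Int.toNat_of_nonneg hnum.le)
  have hqQ : (0 : ℚ) < (q : ℚ) := by exact_mod_cast hq
  have hdq : ((r.den : ℚ) / (q : ℚ)) = (m : ℚ) + contFrac L' := by
    rw [hqcast]; exact hinv
  have hlt1 : ((m : ℚ) * q < (r.den : ℚ)) := by
    rw [← lt_div_iff₀ hqQ, hdq]; linarith [hx.1]
  have hlt2 : ((r.den : ℚ) < ((m : ℚ) + 1) * q) := by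
    rw [← div_lt_iff₀ hqQ, hdq]; linarith [hx.2]
  have h1' : m * q < r.den := by exact_mod_cast hlt1
  have h2' : r.den < (m + 1) * q := by exact_mod_cast hlt2
  intro t ht
  have := SproofAux.signRuns_mem r.den q m hm hq h1' h2' t ht
  simpa using this
end

section
/- Let r = [m_1, ..., m_k] with k ≥ 2 as above, and let m = m_1. If m_2 = 1, then the sequence S(r) contains no two consecutive terms both equal to m; if m_2 ≥ 2, then S(r) contains no two consecutive terms both equal to m+1. -/
private lemma contFrac_nonneg : ∀ (l : List ℕ), (∀ y ∈ l, 0 < y) → 0 ≤ contFrac l := by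
  intro l
  induction l with
  | nil => intro _; simp [contFrac]
  | cons n l ih =>
    intro hpos
    have h1 : 0 ≤ contFrac l := ih fun y hy => hpos y (List.mem_cons_of_mem _ hy)
    have hn : (1 : ℚ) ≤ n := by
      have := hpos n (List.mem_cons_self); exact_mod_cast this
    rw [contFrac]
    positivity

private lemma contFrac_bounds : ∀ (l : List ℕ), l ≠ [] → (∀ y ∈ l, 0 < y) →
    (∀ y ∈ l.getLast?, 2 ≤ y) → 0 < contFrac l ∧ contFrac l < 1 := by
  intro l
  induction l with
  | nil => intro h; exact absurd rfl h
  | cons n l ih =>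
    intro _ hpos hlast
    rcases eq_or_ne l [] with rfl | hl
    · have hn : 2 ≤ n := by simpa using hlast
      have hn' : (2 : ℚ) ≤ n := by exact_mod_cast hn
      rw [contFrac, contFrac]
      constructor
      · positivity
      · rw [div_lt_one (by linarith)]; linarith
    · obtain ⟨m, l', rfl⟩ := List.exists_cons_of_ne_nil hl
      have hlast' : ∀ y ∈ (m :: l').getLast?, 2 ≤ y := by
        intro y hy; apply hlast; rwa [List.getLast?_cons_cons]
      obtain ⟨h0, h1⟩ := ih hl (fun y hy => hpos y (List.mem_cons_of_mem _ hy)) hlast'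
      have hn : (1 : ℚ) ≤ n := by
        have := hpos n (List.mem_cons_self); exact_mod_cast this
      rw [contFrac]
      constructor
      · positivity
      · rw [div_lt_one (by linarith)]; linarith


open List in
private lemma all_eq_of_chain' : ∀ (t : List ℕ) (c : ℕ), (c :: t).Chain' (· == ·) →
    ∀ b ∈ c :: t, b = c := by
  intro t
  induction t with
  | nil => simp
  | cons d t' ih =>
    intro c hc b hb
    simp only [List.Chain', List.isChain_cons_cons] at hc
    have hcd : c = d := by simpa using hc.1
    rcases List.mem_cons.1 hb with rfl | hb
    · rfl
    · rw [ih d hc.2 b hb, hcd]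

open List in
private lemma chunk_replicate {v g : List ℕ} (hg : g ∈ v.splitBy (· == ·)) :
    ∃ c, g = List.replicate g.length c := by
  have hne := List.ne_nil_of_mem_splitBy hg
  have hch := List.isChain_of_mem_splitBy hg
  obtain ⟨c, t, rfl⟩ := List.exists_cons_of_ne_nil hne
  exact ⟨c, List.eq_replicate_iff.2 ⟨rfl, all_eq_of_chain' t c hch⟩⟩

open List in
private lemma extract_runs (f : ℕ → ℕ) (n x : ℕ)
    (h : [x, x] <:+: (((List.range n).map f).splitBy (· == ·)).map List.length) :
    ∃ a c1 c2, 0 < x ∧ a + 2 * x ≤ n ∧ c1 ≠ c2 ∧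
      (∀ i < x, f (a + i) = c1) ∧ (∀ i < x, f (a + x + i) = c2) ∧
      (a = 0 ∨ f (a - 1) ≠ c1) ∧ (a + 2 * x = n ∨ f (a + 2 * x) ≠ c2) := by
  set v : List ℕ := (List.range n).map f with hv
  obtain ⟨S2, T2, hST⟩ := h
  have hST' : (v.splitBy (· == ·)).map List.length = S2 ++ ([x, x] ++ T2) := by
    rw [← hST, List.append_assoc]
  rw [List.map_eq_append_iff] at hST'
  obtain ⟨S, rest, hL1, hmS, hrest⟩ := hST'
  rw [List.map_eq_append_iff] at hrest
  obtain ⟨G, T, hL2, hmG, hmT⟩ := hrest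
  have hGlen : G.length = 2 := by
    have := congrArg List.length hmG; simpa using this
  obtain ⟨g1, g2, rfl⟩ := List.length_eq_two.1 hGlen
  have hx1 : g1.length = x := by simp at hmG; exact hmG.1
  have hx2 : g2.length = x := by simp at hmG; exact hmG.2
  have hLdecomp : v.splitBy (· == ·) = S ++ g1 :: g2 :: T := by
    rw [hL1, hL2]; rfl
  -- chunks are replicates
  have hg1mem : g1 ∈ v.splitBy (· == ·) := by rw [hLdecomp]; simp
  have hg2mem : g2 ∈ v.splitBy (· == ·) := by rw [hLdecomp]; simp
  obtain ⟨c1, hc1⟩ := chunk_replicate hg1mem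
  obtain ⟨c2, hc2⟩ := chunk_replicate hg2mem
  rw [hx1] at hc1; rw [hx2] at hc2
  have hxpos : 0 < x := by
    rcases Nat.eq_zero_or_pos x with h0 | h0
    · exfalso
      have hnil : g1 = [] := by rw [hc1, h0]; rfl
      exact List.ne_nil_of_mem_splitBy hg1mem hnil
    · exact h0
  -- flatten
  have hflat : v = S.flatten ++ (g1 ++ (g2 ++ T.flatten)) := by
    conv_lhs => rw [← List.flatten_splitBy (· == ·) v]
    rw [hLdecomp]; simp
  set a := S.flatten.length with ha
  have hvlen : v.length = n := by rw [hv]; simp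
  have hlen : a + (x + (x + T.flatten.length)) = n := by
    have := congrArg List.length hflat
    rw [hvlen] at this
    simp only [List.length_append, hx1, hx2] at this
    omega
  have hle : a + 2 * x ≤ n := by omega
  -- getElem facts
  have hvget : ∀ j (hj : j < n), v[j]'(hvlen ▸ hj) = f j := by
    intro j hj
    rw [List.getElem_of_eq hv]
    simp
  have hblock1 : ∀ i < x, f (a + i) = c1 := by
    intro i hi
    have hj : a + i < n := by omega
    rw [← hvget _ hj, List.getElem_of_eq hflat,
      List.getElem_append_right (by omega),
      List.getElem_append_left (by rw [hx1]; omega)]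
    rw [List.getElem_of_eq hc1 (by omega)]
    exact List.getElem_replicate ..
  have hblock2 : ∀ i < x, f (a + x + i) = c2 := by
    intro i hi
    have hj : a + x + i < n := by omega
    rw [← hvget _ hj, List.getElem_of_eq hflat,
      List.getElem_append_right (by omega),
      List.getElem_append_right (by rw [hx1]; omega),
      List.getElem_append_left (by rw [hx1, hx2]; omega)]
    rw [List.getElem_of_eq hc2 (by omega)]
    exact List.getElem_replicate ..
  -- chain facts
  have hchain := List.isChain_getLast_head_splitBy (· == ·) v
  rw [hLdecomp, List.isChain_append] at hchain
  obtain ⟨hchS, hchR, hchLR⟩ := hchain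
  rw [List.isChain_cons_cons] at hchR
  have hne12 : c1 ≠ c2 := by
    obtain ⟨h1, h2, hbeq⟩ := hchR.1
    rw [List.getLast_eq_getElem, List.head_eq_getElem] at hbeq
    rw [List.getElem_of_eq hc1 (by omega), List.getElem_of_eq hc2 (by omega)] at hbeq
    simp only [List.getElem_replicate] at hbeq
    simpa using hbeq
  -- left boundary
  have hleft : a = 0 ∨ f (a - 1) ≠ c1 := by
    rcases Nat.eq_zero_or_pos a with h0 | h0
    · exact Or.inl h0
    · right
      have hSne : S ≠ [] := by
        intro hS; rw [hS] at ha; simp at ha; omega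
      obtain ⟨S', g0, hS⟩ := (List.eq_nil_or_concat S).resolve_left hSne
      rw [List.concat_eq_append] at hS
      have hg0mem : g0 ∈ v.splitBy (· == ·) := by rw [hLdecomp, hS]; simp
      obtain ⟨c0, hc0⟩ := chunk_replicate hg0mem
      have hg0ne : g0 ≠ [] := List.ne_nil_of_mem_splitBy hg0mem
      have hg0len : 0 < g0.length := List.length_pos_iff.2 hg0ne
      -- chain relation between g0 and g1
      have hrel : ∃ hg0 hg1, (g0.getLast hg0 == g1.head hg1) = false := by
        have := hchLR g0 (by rw [hS]; simp) g1 (by simp)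
        exact this
      obtain ⟨hh0, hh1, hbeq⟩ := hrel
      have hc0v : g0.getLast hh0 = c0 := by
        rw [List.getLast_eq_getElem, List.getElem_of_eq hc0 (by omega)]
        exact List.getElem_replicate ..
      have hc1v : g1.head hh1 = c1 := by
        rw [List.head_eq_getElem, List.getElem_of_eq hc1 (by omega)]
        exact List.getElem_replicate ..
      rw [hc0v, hc1v] at hbeq
      have hne01 : c0 ≠ c1 := by simpa using hbeq
      -- f (a-1) = c0
      have hj : a - 1 < n := by omega
      have hA : S.flatten = S'.flatten ++ g0 := by rw [hS]; simp
      have halen : a = S'.flatten.length + g0.length := by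
        rw [ha, hA, List.length_append]
      have : f (a - 1) = c0 := by
        rw [← hvget _ hj, List.getElem_of_eq hflat,
          List.getElem_append_left (by omega),
          List.getElem_of_eq hA,
          List.getElem_append_right (by omega)]
        rw [List.getElem_of_eq hc0 (by omega)]
        exact List.getElem_replicate ..
      rw [this]; exact hne01
  -- right boundary
  have hright : a + 2 * x = n ∨ f (a + 2 * x) ≠ c2 := by
    rcases Nat.eq_or_lt_of_le hle with h0 | h0
    · exact Or.inl h0
    · right
      have hTne : T ≠ [] := by
        intro hT; rw [hT] at hlen; simp at hlen; omega
      obtain ⟨g3, T', hT⟩ := List.exists_cons_of_ne_nil hTne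
      have hg3mem : g3 ∈ v.splitBy (· == ·) := by rw [hLdecomp, hT]; simp
      obtain ⟨c3, hc3⟩ := chunk_replicate hg3mem
      have hg3ne : g3 ≠ [] := List.ne_nil_of_mem_splitBy hg3mem
      have hg3len : 0 < g3.length := List.length_pos_iff.2 hg3ne
      have hrel : ∃ hg2 hg3, (g2.getLast hg2 == g3.head hg3) = false := by
        have hch2 := hchR.2
        rw [hT, List.isChain_cons_cons] at hch2
        exact hch2.1
      obtain ⟨hh2, hh3, hbeq⟩ := hrel
      have hc2v : g2.getLast hh2 = c2 := by
        rw [List.getLast_eq_getElem, List.getElem_of_eq hc2 (by omega)]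
        exact List.getElem_replicate ..
      have hc3v : g3.head hh3 = c3 := by
        rw [List.head_eq_getElem, List.getElem_of_eq hc3 (by omega)]
        exact List.getElem_replicate ..
      rw [hc2v, hc3v] at hbeq
      have hne23 : c2 ≠ c3 := by simpa using hbeq
      have hTflat : T.flatten = g3 ++ T'.flatten := by rw [hT]; simp
      have hj : a + 2 * x < n := h0
      have : f (a + 2 * x) = c3 := by
        rw [← hvget _ hj, List.getElem_of_eq hflat,
          List.getElem_append_right (by omega),
          List.getElem_append_right (by rw [hx1]; omega),
          List.getElem_append_right (by rw [hx1, hx2]; omega),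
          List.getElem_of_eq hTflat,
          List.getElem_append_left (by omega)]
        rw [List.getElem_of_eq hc3 (by omega)]
        exact List.getElem_replicate ..
      rw [this]; exact hne23.symm
  exact ⟨a, c1, c2, hxpos, hle, hne12, hblock1, hblock2, hleft, hright⟩


private lemma step_eq {u v : ℕ} (h : v = u ∨ v = u + 1) (hp : v % 2 = u % 2) : v = u := by omega
private lemma step_succ {u v : ℕ} (h : v = u ∨ v = u + 1) (hp : ¬ v % 2 = u % 2) : v = u + 1 := by
  omega

private lemma key (p q x a c1 c2 : ℕ) (hq : 0 < q) (hqp : q < p) (hx : 0 < x)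
    (hle : a + 2 * x ≤ 2 * p) (hne : c1 ≠ c2)
    (hb1 : ∀ i < x, (a + i) * q / p % 2 = c1)
    (hb2 : ∀ i < x, (a + x + i) * q / p % 2 = c2)
    (hL : a = 0 ∨ ¬ (a - 1) * q / p % 2 = c1)
    (hR : a + 2 * x = 2 * p ∨ ¬ (a + 2 * x) * q / p % 2 = c2) :
    2 * p < 2 * (x * q) + q ∧ 2 * (x * q) < 2 * p + q := by
  obtain ⟨x', rfl⟩ : ∃ x', x = x' + 1 := ⟨x - 1, by omega⟩
  have hp : 0 < p := by omega
  have hstep : ∀ j : ℕ, (j + 1) * q / p = j * q / p ∨ (j + 1) * q / p = j * q / p + 1 := by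
    intro j
    have h1 : j * q / p ≤ (j + 1) * q / p :=
      Nat.div_le_div_right (Nat.mul_le_mul_right _ (by omega))
    have h2 : (j + 1) * q / p ≤ j * q / p + 1 := by
      have e : (j + 1) * q = j * q + q := by ring
      rw [e]
      calc (j * q + q) / p ≤ (j * q + p) / p := Nat.div_le_div_right (by omega)
        _ = j * q / p + 1 := by rw [Nat.add_div_right _ hp]
    omega
  set t := a * q / p with ht
  -- first block constant
  have const1 : ∀ i < x' + 1, (a + i) * q / p = t := by
    intro i
    induction i with
    | zero => intro _; simp [ht]
    | succ k ih =>
      intro hk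
      have hkx : k < x' + 1 := by omega
      have e : a + (k + 1) = (a + k) + 1 := by omega
      rw [e, ← ih hkx]
      apply step_eq (hstep (a + k))
      rw [← e, hb1 (k + 1) hk, hb1 k hkx]
  -- jump at a + x
  have hax : (a + (x' + 1)) * q / p = t + 1 := by
    have e : a + (x' + 1) = (a + x') + 1 := by omega
    rw [e, ← const1 x' (by omega)]
    apply step_succ (hstep (a + x'))
    rw [← e]
    have h1 := hb2 0 (by omega)
    rw [Nat.add_zero] at h1
    rw [h1, hb1 x' (by omega)]
    exact fun h => hne h.symm
  -- second block constant
  have const2 : ∀ i < x' + 1, (a + (x' + 1) + i) * q / p = t + 1 := by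
    intro i
    induction i with
    | zero => intro _; simpa using hax
    | succ k ih =>
      intro hk
      have hkx : k < x' + 1 := by omega
      have e : a + (x' + 1) + (k + 1) = (a + (x' + 1) + k) + 1 := by omega
      rw [e, ← ih hkx]
      apply step_eq (hstep (a + (x' + 1) + k))
      rw [← e, hb2 (k + 1) hk, hb2 k hkx]
  -- F1
  have F1 : t * p ≤ a * q := by rw [ht]; exact Nat.div_mul_le_self _ _
  -- F2
  have F2 : a * q < t * p + q := by
    rcases hL with h0 | hpar
    · subst h0
      rw [Nat.zero_mul]
      exact Nat.lt_add_left _ hq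
    · have ha : 0 < a := by
        rcases Nat.eq_zero_or_pos a with rfl | h
        · exact absurd (by simpa using hb1 0 (by omega)) (by simpa using hpar)
        · exact h
      obtain ⟨a', rfl⟩ : ∃ a', a = a' + 1 := ⟨a - 1, by omega⟩
      have e1 : a' + 1 - 1 = a' := by omega
      rw [e1] at hpar
      have hb10 := hb1 0 (by omega)
      rw [Nat.add_zero] at hb10
      have hjump : (a' + 1) * q / p = a' * q / p + 1 := by
        apply step_succ (hstep a')
        rw [hb10]
        exact fun h => hpar h.symm
      have h4 : a' * q < (a' * q / p + 1) * p := (Nat.div_lt_iff_lt_mul hp).1 (Nat.lt_succ_self _)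
      have h5 : (a' * q / p + 1) * p = t * p := by rw [← hjump, ht]
      have h6 : (a' + 1) * q = a' * q + q := by ring
      linarith [h4, h5.ge, h5.le]
  -- F4 : upper bound at right end of second block
  have F4 : (a + (x' + 1) + x') * q < (t + 2) * p := by
    have h1 : (a + (x' + 1) + x') * q / p < t + 2 := by
      rw [const2 x' (by omega)]; omega
    exact (Nat.div_lt_iff_lt_mul hp).1 h1
  -- F5 : lower bound at a + 2x
  have F5 : (t + 2) * p ≤ (a + 2 * (x' + 1)) * q := by
    rcases hR with hend | hpar
    · -- a + 2x = 2p
      have e2 : a + (x' + 1) + x' = 2 * p - 1 := by omega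
      have h1 : (t + 1) * p ≤ (2 * p - 1) * q := by
        have h := Nat.div_mul_le_self ((a + (x' + 1) + x') * q) p
        rw [const2 x' (by omega)] at h
        rwa [e2] at h
      have h2 : (2 * p - 1) * q < 2 * p * q := by
        exact (Nat.mul_lt_mul_right hq).2 (by omega)
      have h3 : (t + 1) * p < 2 * q * p := by
        have e3 : 2 * p * q = 2 * q * p := by ring
        linarith
      have h4 : t + 1 < 2 * q := (Nat.mul_lt_mul_right hp).1 h3
      have h5 : (t + 2) * p ≤ 2 * q * p := Nat.mul_le_mul_right p (by omega)
      rw [hend]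
      have e4 : 2 * p * q = 2 * q * p := by ring
      linarith
    · -- parity jump at a + 2x
      have e5 : a + 2 * (x' + 1) = (a + (x' + 1) + x') + 1 := by omega
      have hjump : (a + 2 * (x' + 1)) * q / p = (a + (x' + 1) + x') * q / p + 1 := by
        rw [e5]
        apply step_succ (hstep (a + (x' + 1) + x'))
        rw [← e5, hb2 x' (by omega)]
        exact hpar
      have h1 : (t + 2) ≤ (a + 2 * (x' + 1)) * q / p := by
        rw [hjump, const2 x' (by omega)]
      have h2 := Nat.div_mul_le_self ((a + 2 * (x' + 1)) * q) p
      calc (t + 2) * p ≤ ((a + 2 * (x' + 1)) * q / p) * p := Nat.mul_le_mul_right p h1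
        _ ≤ (a + 2 * (x' + 1)) * q := h2
  constructor
  · have e6 : (a + 2 * (x' + 1)) * q = a * q + 2 * ((x' + 1) * q) := by ring
    have e7 : (t + 2) * p = t * p + 2 * p := by ring
    linarith
  · have e8 : (a + (x' + 1) + x') * q + q = a * q + 2 * ((x' + 1) * q) := by ring
    have e9 : (t + 2) * p = t * p + 2 * p := by ring
    linarith


/-- if `m₂ = 1` then `S(r)` has no two consecutive terms `(m, m)`;
if `m₂ ≥ 2` then `S(r)` has no two consecutive terms `(m+1, m+1)`. -/
theorem Sseq_no_consecutive (m1 m2 : ℕ) (rest : List ℕ) (h1 : 0 < m1) (h2 : 0 < m2)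
    (hpos : ∀ x ∈ rest, 0 < x)
    (hlast : ∀ x ∈ (m1 :: m2 :: rest).getLast?, 2 ≤ x)
    (r : ℚ) (hr : r = contFrac (m1 :: m2 :: rest)) :
    (m2 = 1 → ¬ [m1, m1] <:+: SseqQ r) ∧
    (2 ≤ m2 → ¬ [m1 + 1, m1 + 1] <:+: SseqQ r) := by
  have hlast2 : ∀ y ∈ (m2 :: rest).getLast?, 2 ≤ y := by
    intro y hy; apply hlast; rwa [List.getLast?_cons_cons]
  have hpos2 : ∀ y ∈ (m2 :: rest), 0 < y := by
    intro y hy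
    rcases List.mem_cons.1 hy with rfl | hy
    · exact h2
    · exact hpos y hy
  obtain ⟨hs0, hs1⟩ := contFrac_bounds (m2 :: rest) (by simp) hpos2 hlast2
  set s : ℚ := contFrac (m2 :: rest) with hsdef
  have hs_eq : s = 1 / ((m2 : ℚ) + contFrac rest) := rfl
  have hr' : r = 1 / ((m1 : ℚ) + s) := by rw [hr]; rfl
  have hm1 : (1 : ℚ) ≤ (m1 : ℚ) := by exact_mod_cast h1
  have hD : (1 : ℚ) < (m1 : ℚ) + s := by linarith
  have hrpos : 0 < r := by rw [hr']; positivity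
  have hrlt1 : r < 1 := by
    rw [hr', div_lt_one (by linarith)]; linarith
  set q : ℕ := r.num.toNat with hqdef
  set p : ℕ := r.den with hpdef
  have hnum : 0 < r.num := Rat.num_pos.2 hrpos
  have hq0 : 0 < q := by rw [hqdef]; omega
  have hqQ : ((q : ℕ) : ℚ) = (r.num : ℚ) := by
    rw [hqdef]
    exact_mod_cast congrArg (Int.cast : ℤ → ℚ) (Int.toNat_of_nonneg hnum.le)
  have hp0 : 0 < p := r.pos
  have hpQ : (0 : ℚ) < (p : ℚ) := by exact_mod_cast hp0
  have hqQ0 : (0 : ℚ) < (q : ℚ) := by exact_mod_cast hq0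
  have hDne : (m1 : ℚ) + s ≠ 0 := by linarith
  have hE : (q : ℚ) * ((m1 : ℚ) + s) = (p : ℚ) := by
    rw [hqQ, hpdef]
    have h0 : (r.num : ℚ) / (r.den : ℚ) = 1 / ((m1 : ℚ) + s) := by
      rw [Rat.num_div_den, hr']
    have hden : ((r.den : ℕ) : ℚ) ≠ 0 := by
      have : (0:ℚ) < ((r.den : ℕ) : ℚ) := by exact_mod_cast r.pos
      linarith
    field_simp at h0
    linarith [h0]
  have hqp : q < p := by
    have : (q : ℚ) < (p : ℚ) := by nlinarith [hE, hs0, hm1, hqQ0]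
    exact_mod_cast this
  constructor
  · -- m2 = 1
    intro hm2 hinf
    have hrne : rest ≠ [] := by
      intro hre
      rw [hre, hm2] at hlast2
      have := hlast2 1 (by simp)
      omega
    obtain ⟨rh, rt, hre⟩ := List.exists_cons_of_ne_nil hrne
    have hlast3 : ∀ y ∈ rest.getLast?, 2 ≤ y := by
      intro y hy; apply hlast2; rw [hre] at hy ⊢; rwa [List.getLast?_cons_cons]
    obtain ⟨hs0', hs1'⟩ := contFrac_bounds rest hrne hpos hlast3
    have hshalf : (1 : ℚ) / 2 < s := by
      rw [hs_eq, hm2]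
      rw [div_lt_div_iff₀ (by norm_num) (by push_cast; linarith)]
      push_cast
      linarith
    have Hq1 : 2 * m1 * q + q < 2 * p := by
      have hQ : 2 * (m1 : ℚ) * (q : ℚ) + (q : ℚ) < 2 * (p : ℚ) := by
        nlinarith [hE, hshalf, hqQ0]
      have := hQ
      push_cast at this ⊢
      exact_mod_cast this
    have hinf' : [m1, m1] <:+:
        (((List.range (2 * p)).map fun j => j * q / p % 2).splitBy (· == ·)).map
          List.length := hinf
    obtain ⟨a, c1, c2, hx, hle, hne, hb1, hb2, hLft, hRgt⟩ :=
      extract_runs (fun j => j * q / p % 2) (2 * p) m1 hinf'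
    obtain ⟨k1, k2⟩ := key p q m1 a c1 c2 hq0 hqp hx hle hne hb1 hb2 hLft hRgt
    linarith
  · -- 2 ≤ m2
    intro hm2 hinf
    have hs0' : 0 ≤ contFrac rest := contFrac_nonneg rest hpos
    have hm2Q : (2 : ℚ) ≤ (m2 : ℚ) := by exact_mod_cast hm2
    have hshalf : s ≤ (1 : ℚ) / 2 := by
      rw [hs_eq]
      rw [div_le_div_iff₀ (by linarith) (by norm_num)]
      linarith
    have Hq2 : 2 * p ≤ 2 * m1 * q + q := by
      have hQ : 2 * (p : ℚ) ≤ 2 * (m1 : ℚ) * (q : ℚ) + (q : ℚ) := by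
        nlinarith [hE, hshalf, hqQ0]
      exact_mod_cast hQ
    have hinf' : [m1 + 1, m1 + 1] <:+:
        (((List.range (2 * p)).map fun j => j * q / p % 2).splitBy (· == ·)).map
          List.length := hinf
    obtain ⟨a, c1, c2, hx, hle, hne, hb1, hb2, hLft, hRgt⟩ :=
      extract_runs (fun j => j * q / p % 2) (2 * p) (m1 + 1) hinf'
    obtain ⟨k1, k2⟩ := key p q (m1 + 1) a c1 c2 hq0 hqp hx hle hne hb1 hb2 hLft hRgt
    linarith
end

section
/- Let r = [m_1, ..., m_k] with k ≥ 2 and m_k ≥ 2. Then the sequence S(r) begins with the term m_1 + 1 and ends with the term m_1. -/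
namespace MyAux
open List

theorem splitByLoop_eq_append' {α : Type*} {r : α → α → Bool} {l : List α} {a : α} {g : List α}
    (gs : List (List α)) : splitBy.loop r l a g gs = gs.reverse ++ splitBy.loop r l a g [] := by
  induction l generalizing a g gs with
  | nil => simp [splitBy.loop]
  | cons b l IH =>
    simp_rw [splitBy.loop]
    split <;> rw [IH]
    conv_rhs => rw [IH]
    simp

theorem splitByLoop_append {α : Type*} {r : α → α → Bool} (l : List α) (a b : α) (t : List α)
    (g : List α) (h : r ((a :: l).getLast (by simp)) b = false) :
    splitBy.loop r (l ++ b :: t) a g [] = splitBy.loop r l a g [] ++ splitBy r (b :: t) := by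
  induction l generalizing a g with
  | nil =>
    simp only [getLast_singleton] at h
    simp only [nil_append, splitBy.loop, h, splitBy]
    rw [splitByLoop_eq_append' [(a :: g).reverse]]
  | cons c l IH =>
    rw [getLast_cons_cons] at h
    cases hrac : r a c with
    | true =>
      simp only [cons_append, splitBy.loop, hrac, append_eq]
      exact IH c (a :: g) h
    | false =>
      simp only [cons_append, splitBy.loop, hrac, append_eq]
      rw [splitByLoop_eq_append' [(a :: g).reverse], IH c [] h,
        splitByLoop_eq_append' ([(a :: g).reverse])]
      simp

theorem splitBy_append {α : Type*} {r : α → α → Bool} {l₁ l₂ : List α} {a b : α}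
    (h₁ : l₁.getLast? = some a) (h₂ : l₂.head? = some b) (h : r a b = false) :
    (l₁ ++ l₂).splitBy r = l₁.splitBy r ++ l₂.splitBy r := by
  obtain ⟨c, l, rfl⟩ : ∃ c l, l₁ = c :: l := by
    cases l₁ with
    | nil => simp at h₁
    | cons c l => exact ⟨c, l, rfl⟩
  obtain ⟨t, rfl⟩ : ∃ t, l₂ = b :: t := by
    cases l₂ with
    | nil => simp at h₂
    | cons d t =>
      simp only [head?_cons, Option.some_inj] at h₂
      exact ⟨t, by rw [h₂]⟩
  have ha : (c :: l).getLast (by simp) = a := by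
    rwa [getLast?_eq_getLast (l := c :: l) (by simp), Option.some_inj] at h₁
  simp only [cons_append, splitBy]
  exact splitByLoop_append l c b t [] (by rw [ha]; exact h)

theorem splitByLoop_replicate {α : Type*} {r : α → α → Bool} {c : α} (h : r c c = true) (n : ℕ)
    (g : List α) :
    splitBy.loop r (replicate n c) c g [] = [g.reverse ++ c :: replicate n c] := by
  induction n generalizing g with
  | zero => simp [splitBy.loop]
  | succ n IH =>
    rw [replicate_succ, splitBy.loop, h, IH]
    simp [replicate_succ]

theorem splitBy_replicate {α : Type*} {r : α → α → Bool} {c : α} (h : r c c = true) (n : ℕ) :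
    (replicate (n+1) c).splitBy r = [replicate (n+1) c] := by
  rw [replicate_succ, splitBy, splitByLoop_replicate h]
  simp [replicate_succ]

theorem map_range_eq_replicate {n : ℕ} {g : ℕ → ℕ} {c : ℕ} (h : ∀ j < n, g j = c) :
    (range n).map g = replicate n c := by
  refine eq_replicate_iff.2 ⟨by simp, fun b hb => ?_⟩
  simp only [mem_map, mem_range] at hb
  obtain ⟨j, hj, rfl⟩ := hb
  exact h j hj

theorem signRuns_head_last (p q m : ℕ) (hm : 1 ≤ m) (hq : 1 ≤ q)
    (h1 : m * q < p) (h2 : p < (m + 1) * q) :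
    (signRuns p q).head? = some (m + 1) ∧ (signRuns p q).getLast? = some m := by
  have hmp : m < p := lt_of_le_of_lt (Nat.le_mul_of_pos_right m hq) h1
  have hmq2 : (m + 1) * q < 2 * p := by nlinarith
  set f : ℕ → ℕ := fun j => (j * q / p) % 2 with hf
  -- values of f
  have f0 : ∀ j ≤ m, f j = 0 := by
    intro j hj
    have : j * q < p := lt_of_le_of_lt (Nat.mul_le_mul_right q hj) h1
    simp [hf, Nat.div_eq_of_lt this]
  have f1 : f (m + 1) = 1 := by
    have hdiv : (m + 1) * q / p = 1 := by
      apply Nat.div_eq_of_lt_le <;> omega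
    simp [hf, hdiv]
  obtain ⟨s, hs, hs2⟩ : ∃ s, 2 * p = s + m ∧ m + 2 ≤ s := ⟨2 * p - m, by omega, by omega⟩
  obtain ⟨Q, hQ⟩ : ∃ Q, 2 * q = Q + 1 := ⟨2 * q - 1, by omega⟩
  have e1 : s * q + m * q = 2 * p * q := by rw [← add_mul, ← hs]
  have e2 : Q * p + p = 2 * p * q := by
    have : (Q + 1) * p = (2 * q) * p := by rw [hQ]
    linarith [this]
  have ftop : ∀ i < m, f (s + i) = 1 := by
    intro i hi
    have hdiv : (s + i) * q / p = Q := by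
      apply Nat.div_eq_of_lt_le
      · have : Q * p ≤ s * q := by linarith
        calc Q * p ≤ s * q := this
          _ ≤ (s + i) * q := Nat.mul_le_mul_right q (by omega)
      · have hlt : s + i < 2 * p := by omega
        calc (s + i) * q < (2 * p) * q := by
              exact Nat.mul_lt_mul_of_pos_right hlt hq
          _ = (Q + 1) * p := by linarith
    simp only [hf, hdiv]
    omega
  obtain ⟨s', rfl⟩ : ∃ s', s = s' + 1 := ⟨s - 1, by omega⟩
  have fpen : f s' = 0 := by
    obtain ⟨D, hD⟩ : ∃ D, 2 * q = D + 2 := ⟨2 * q - 2, by omega⟩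
    have e3 : s' * q + (m + 1) * q = 2 * p * q := by
      have : (s' + 1) * q + m * q = 2 * p * q := e1
      ring_nf at this ⊢
      linarith [this]
    have hdiv : s' * q / p = D := by
      have e4 : (D + 2) * p = (2 * q) * p := by rw [hD]
      apply Nat.div_eq_of_lt_le
      · nlinarith [e3, e4, hmq2]
      · nlinarith [e3, e4, h2]
    simp only [hf, hdiv]
    omega
  constructor
  · -- head
    obtain ⟨u, hu⟩ : ∃ u, 2 * p = (m + 2) + u := ⟨2 * p - (m + 2), by omega⟩
    obtain ⟨rest, hM⟩ : ∃ rest, (range (2 * p)).map f = replicate (m + 1) 0 ++ 1 :: rest := by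
      refine ⟨(range u).map (f ∘ ((m + 2) + ·)), ?_⟩
      rw [hu, range_add, show m + 2 = (m + 1) + 1 from rfl, range_succ, map_append, map_append,
        map_singleton, map_map, f1, append_assoc, singleton_append]
      congr 1
      exact map_range_eq_replicate (n := m + 1) (fun j hj => f0 j (by omega))
    rw [signRuns, hM,
      splitBy_append (a := 0) (b := 1)
        (by rw [replicate_succ', getLast?_concat]) (by rw [head?_cons]) rfl,
      splitBy_replicate rfl m]
    simp
  · -- last
    obtain ⟨m', rfl⟩ : ∃ m', m = m' + 1 := ⟨m - 1, by omega⟩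
    have hM : (range (2 * p)).map f
        = ((range s').map f ++ [0]) ++ replicate (m' + 1) 1 := by
      rw [hs, range_add, map_append]
      rw [map_map]
      congr 1
      · rw [range_succ, map_append, map_singleton, fpen]
      · exact map_range_eq_replicate (n := m' + 1)
          (fun j hj => by simpa [Function.comp] using ftop j hj)
    rw [signRuns, hM,
      splitBy_append (a := 0) (b := 1)
        getLast?_concat (by rw [replicate_succ, head?_cons]) rfl,
      splitBy_replicate rfl m']
    rw [map_append]
    simp

theorem contFrac_mem_Ioo (l : List ℕ) (hne : l ≠ []) (hpos : ∀ x ∈ l, 0 < x)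
    (hlast : ∀ x ∈ l.getLast?, 2 ≤ x) : 0 < contFrac l ∧ contFrac l < 1 := by
  induction l with
  | nil => exact absurd rfl hne
  | cons m t IH =>
    cases t with
    | nil =>
      have hm : 2 ≤ m := by
        have := hlast m (by simp)
        exact this
      have hm' : (2 : ℚ) ≤ (m : ℚ) := by exact_mod_cast hm
      constructor
      · simp only [contFrac]
        positivity
      · simp only [contFrac]
        rw [div_lt_one (by linarith)]
        linarith
    | cons b t' =>
      have IH' := IH (by simp)
        (fun x hx => hpos x (List.mem_cons_of_mem m hx))
        (by
          intro x hx
          apply hlast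
          rwa [List.getLast?_cons_cons])
      obtain ⟨h0, h1⟩ := IH'
      have hm : 1 ≤ m := hpos m (by simp)
      have hm' : (1 : ℚ) ≤ (m : ℚ) := by exact_mod_cast hm
      have e : contFrac (m :: b :: t') = 1 / ((m : ℚ) + contFrac (b :: t')) := rfl
      constructor
      · rw [e]; positivity
      · rw [e, div_lt_one (by linarith)]
        linarith

end MyAux

/-- for `r = [m₁,…,m_k]` with `k ≥ 2` and `m_k ≥ 2`, the sequence `S(r)`
begins with `m₁ + 1` and ends with `m₁`. -/
theorem Sseq_head_last (L : List ℕ) (hk : 2 ≤ L.length) (hpos : ∀ x ∈ L, 0 < x)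
    (hlast : ∀ x ∈ L.getLast?, 2 ≤ x) (r : ℚ) (hr : r = contFrac L) :
    (SseqQ r).head? = some (L.headI + 1) ∧ (SseqQ r).getLast? = some L.headI := by
  obtain ⟨m, b, t, rfl⟩ : ∃ m b t, L = m :: b :: t := by
    match L, hk with
    | m :: b :: t, _ => exact ⟨m, b, t, rfl⟩
  set l := b :: t with hl
  have hc := MyAux.contFrac_mem_Ioo l (by simp [hl]) (fun x hx => hpos x (List.mem_cons_of_mem m hx))
    (by intro x hx; apply hlast; rwa [hl, List.getLast?_cons_cons])
  obtain ⟨hc0, hc1⟩ := hc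
  set c := contFrac l with hcdef
  have hm : 1 ≤ m := hpos m (by simp)
  have hm' : (1 : ℚ) ≤ (m : ℚ) := by exact_mod_cast hm
  have hrc : r = 1 / ((m : ℚ) + c) := by rw [hr]; rfl
  have hden : (0 : ℚ) < (m : ℚ) + c := by linarith
  have hr0 : 0 < r := by rw [hrc]; positivity
  have hinv : 1 / r = (m : ℚ) + c := by
    rw [hrc, one_div_one_div]
  set p := r.den with hp
  set q := r.num.toNat with hq
  have hnum : 0 < r.num := Rat.num_pos.2 hr0
  have hq1 : 1 ≤ q := by simp [hq]; omega
  have hqQ : ((q : ℤ) : ℚ) = (r.num : ℚ) := by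
    rw [hq]; norm_cast; omega
  have hqQ' : (q : ℚ) = (r.num : ℚ) := by exact_mod_cast hqQ
  have hpQ : (0 : ℚ) < (q : ℚ) := by rw [hqQ']; exact_mod_cast hnum
  have hrpq : r = (q : ℚ) / (p : ℚ) := by
    rw [hqQ', hp]; exact (Rat.num_div_den r).symm
  have hpden : (0 : ℚ) < (p : ℚ) := by
    have := r.pos
    exact_mod_cast this
  have hkey : ((p : ℚ)) = ((m : ℚ) + c) * q := by
    have : 1 / ((q : ℚ) / (p : ℚ)) = (m : ℚ) + c := by rw [← hrpq]; exact hinv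
    rw [one_div_div] at this
    field_simp at this
    linarith [this]
  have hlt1 : (m : ℚ) * q < p := by
    rw [hkey]; nlinarith
  have hlt2 : (p : ℚ) < ((m : ℚ) + 1) * q := by
    rw [hkey]; nlinarith
  have hlt1' : m * q < p := by exact_mod_cast (by push_cast; exact hlt1 : ((m * q : ℕ) : ℚ) < (p : ℕ))
  have hlt2' : p < (m + 1) * q := by exact_mod_cast (by push_cast; exact hlt2 : ((p : ℕ) : ℚ) < ((m + 1) * q : ℕ))
  have := MyAux.signRuns_head_last p q m hm hq1 hlt1' hlt2'
  simpa [SseqQ, List.headI] using this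
end

section
/- For r = (n+1)/(3n+2) with n ≥ 2 an integer (so r = [2,1,n] as a continued fraction), the cyclic S-sequence CS(r) equals ((3,3,...,3, 2, 3,3,...,3, 2)) with n threes in each block; equivalently S(r) = (n⟨3⟩, 2, n⟨3⟩, 2) where n⟨3⟩ denotes n successive 3's. -/
open List

/-- one run: `replicate (len+1) value` -/
def rep (p : ℕ × ℕ) : List ℕ := List.replicate (p.1 + 1) p.2

lemma loop_rep (l : List ℕ) (k v : ℕ) (g : List ℕ) (gs : List (List ℕ)) :
    List.splitBy.loop (· == ·) (List.replicate k v ++ l) v g gs =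
      List.splitBy.loop (· == ·) l v (List.replicate k v ++ g) gs := by
  induction k generalizing g with
  | zero => simp
  | succ k ih =>
      rw [List.replicate_succ, cons_append, List.splitBy.loop]
      simp only [beq_self_eq_true]
      rw [ih (v :: g)]
      congr 1
      rw [show v :: g = [v] ++ g from rfl, ← List.append_assoc, ← List.replicate_succ',
        List.replicate_succ, List.cons_append]

lemma loop_main (R : List (ℕ × ℕ)) (v : ℕ) (g : List ℕ) (gs : List (List ℕ))
    (hc : List.Chain' (fun a b => a.2 ≠ b.2) R)
    (hh : ∀ p ∈ R.head?, p.2 ≠ v) :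
    List.splitBy.loop (· == ·) ((R.map rep).flatten) v g gs =
      gs.reverse ++ ((v :: g).reverse :: R.map rep) := by
  induction R generalizing v g gs with
  | nil => simp [List.splitBy.loop]
  | cons p R ih =>
      obtain ⟨k, w⟩ := p
      have hw : w ≠ v := hh (k, w) rfl
      have hflat : ((((k, w) :: R).map rep).flatten)
          = w :: (List.replicate k w ++ (R.map rep).flatten) := by
        simp [rep, List.replicate_succ]
      rw [hflat, List.splitBy.loop]
      have hbe : (v == w) = false := by simp [hw.symm]
      simp only [hbe]
      rw [loop_rep]
      rw [ih w (List.replicate k w ++ []) _ hc.tail]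
      · simp [rep, List.replicate_succ']
      · intro q hq
        rcases R with _ | ⟨q', R'⟩
        · simp at hq
        · simp at hq
          subst hq
          exact (List.isChain_cons_cons.1 hc).1.symm

lemma splitBy_runs (R : List (ℕ × ℕ)) (hR : R ≠ [])
    (hc : List.Chain' (fun a b => a.2 ≠ b.2) R) :
    ((R.map rep).flatten).splitBy (· == ·) = R.map rep := by
  rcases R with _ | ⟨⟨k, v⟩, R⟩
  · exact absurd rfl hR
  have hflat : ((((k, v) :: R).map rep).flatten)
      = v :: (List.replicate k v ++ (R.map rep).flatten) := by
    simp [rep, List.replicate_succ]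
  rw [hflat]
  show List.splitBy.loop (· == ·) _ v [] [] = _
  rw [loop_rep, loop_main R v _ _ hc.tail]
  · simp [rep, List.replicate_succ']
  · intro q hq
    rcases R with _ | ⟨q', R'⟩
    · simp at hq
    · simp at hq
      subst hq
      exact (List.isChain_cons_cons.1 hc).1.symm

lemma key1 (n a b : ℕ) (hb : b < 3) (h : 3 * a + b < 3 * n + 2) :
    (3 * a + b) * (n + 1) / (3 * n + 2) = a := by
  apply Nat.div_eq_of_lt_le
  · nlinarith
  · interval_cases b <;> nlinarith

lemma fdiv1 (n j : ℕ) (hj : j < 3 * n + 2) : j * (n + 1) / (3 * n + 2) = j / 3 := by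
  have h := Nat.div_add_mod j 3
  conv_lhs => rw [← h]
  rw [key1 n (j / 3) (j % 3) (Nat.mod_lt _ (by norm_num)) (by omega)]

lemma key2 (n a b : ℕ) (hb : b < 3) (h1 : 3 * n + 2 ≤ 3 * a + b) (h2 : 3 * a + b < 6 * n + 4) :
    (3 * a + b) * (n + 1) / (3 * n + 2) = (3 * a + b + 1) / 3 := by
  interval_cases b
  · rw [show (3 * a + 0 + 1) / 3 = a by omega]
    apply Nat.div_eq_of_lt_le <;> nlinarith
  · rw [show (3 * a + 1 + 1) / 3 = a by omega]
    apply Nat.div_eq_of_lt_le <;> nlinarith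
  · rw [show (3 * a + 2 + 1) / 3 = a + 1 by omega]
    apply Nat.div_eq_of_lt_le <;> nlinarith

lemma fdiv2 (n j : ℕ) (h1 : 3 * n + 2 ≤ j) (h2 : j < 6 * n + 4) :
    j * (n + 1) / (3 * n + 2) = (j + 1) / 3 := by
  have h := Nat.div_add_mod j 3
  conv_lhs => rw [← h]
  rw [key2 n (j / 3) (j % 3) (Nat.mod_lt _ (by norm_num)) (by omega) (by omega)]
  omega

lemma Eblocks (v m : ℕ) :
    (List.range (3 * m)).map (fun j => (v + j / 3) % 2) =
      ((List.range m).map fun k => List.replicate 3 ((v + k) % 2)).flatten := by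
  induction m with
  | zero => simp
  | succ m ih =>
      rw [show 3 * (m + 1) = 3 * m + 3 by ring, List.range_add, List.map_append,
        List.map_map, ih]
      conv_rhs => rw [List.range_succ]
      rw [List.map_append, List.flatten_append]
      congr 1
      rw [show List.range 3 = [0, 1, 2] from rfl]
      simp only [List.map_cons, List.map_nil, Function.comp]
      rw [show (v + (3 * m + 0) / 3) % 2 = (v + m) % 2 by omega,
        show (v + (3 * m + 1) / 3) % 2 = (v + m) % 2 by omega,
        show (v + (3 * m + 2) / 3) % 2 = (v + m) % 2 by omega]
      simp [List.replicate_succ]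

lemma Efull (v m : ℕ) :
    (List.range (3 * m + 2)).map (fun j => (v + j / 3) % 2) =
      ((List.range m).map fun k => List.replicate 3 ((v + k) % 2)).flatten
        ++ List.replicate 2 ((v + m) % 2) := by
  rw [List.range_add, List.map_append, List.map_map, Eblocks]
  congr 1
  rw [show List.range 2 = [0, 1] from rfl]
  simp only [List.map_cons, List.map_nil, Function.comp]
  rw [show (v + (3 * m + 0) / 3) % 2 = (v + m) % 2 by omega,
    show (v + (3 * m + 1) / 3) % 2 = (v + m) % 2 by omega]
  rfl

/-- for `r = (n+1)/(3n+2)` with `n ≥ 2`,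
`S(r) = (n⟨3⟩, 2, n⟨3⟩, 2)`. -/
theorem Sseq_2_1_n (n : ℕ) (hn : 2 ≤ n) :
    signRuns (3 * n + 2) (n + 1) =
      List.replicate n 3 ++ [2] ++ List.replicate n 3 ++ [2] := by
  set f : ℕ → ℕ × ℕ :=
    (fun i => ((if i = n ∨ i = 2 * n + 1 then 1 else 2), i % 2)) with hf
  set R : List (ℕ × ℕ) := (List.range (2 * n + 2)).map f with hRdef
  -- Step A: the sign list is the flatten of the runs
  have hA : ((List.range (2 * (3 * n + 2))).map fun j => (j * (n + 1) / (3 * n + 2)) % 2)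
      = (R.map rep).flatten := by
    have hs : (fun j => (j * (n + 1) / (3 * n + 2)) % 2) =
        (fun j => (j * (n + 1) / (3 * n + 2)) % 2) := rfl
    -- left side split
    rw [show 2 * (3 * n + 2) = (3 * n + 2) + (3 * n + 2) by ring, List.range_add,
      List.map_append, List.map_map]
    have hL1 : (List.range (3 * n + 2)).map (fun j => (j * (n + 1) / (3 * n + 2)) % 2)
        = (List.range (3 * n + 2)).map (fun j => (0 + j / 3) % 2) := by
      apply List.map_congr_left
      intro j hj
      rw [List.mem_range] at hj
      rw [fdiv1 n j hj, Nat.zero_add]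
    have hL2 : (List.range (3 * n + 2)).map
          ((fun j => (j * (n + 1) / (3 * n + 2)) % 2) ∘ (fun i => 3 * n + 2 + i))
        = (List.range (3 * n + 2)).map (fun i => ((n + 1) + i / 3) % 2) := by
      apply List.map_congr_left
      intro i hi
      rw [List.mem_range] at hi
      show ((3 * n + 2 + i) * (n + 1) / (3 * n + 2)) % 2 = _
      rw [fdiv2 n (3 * n + 2 + i) (by omega) (by omega)]
      omega
    rw [hL1, hL2, Efull, Efull]
    -- right side split
    rw [hRdef, show 2 * n + 2 = (n + 1) + (n + 1) by ring, List.range_add,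
      List.range_succ]
    simp only [List.map_append, List.map_map, List.flatten_append, List.map_cons,
      List.map_nil, List.flatten_cons, List.flatten_nil, List.append_nil,
      List.append_assoc]
    congr 1
    · congr 1
      apply List.map_congr_left
      intro k hk
      rw [List.mem_range] at hk
      have hc : ¬(k = n ∨ k = 2 * n + 1) := by omega
      simp [hf, rep, hc]
    congr 1
    · simp [hf, rep]
    congr 1
    · congr 1
      apply List.map_congr_left
      intro k hk
      rw [List.mem_range] at hk
      have hc : ¬(n + 1 + k = n ∨ n + 1 + k = 2 * n + 1) := by omega
      show List.replicate 3 ((n + 1 + k) % 2) = rep (f (n + 1 + k))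
      simp [hf, rep, hc]
    · have hc : (n + 1 + n = n ∨ n + 1 + n = 2 * n + 1) := Or.inr (by omega)
      show _ = rep (f (n + 1 + n))
      simp only [hf, rep]
      rw [if_pos hc]
  -- Step B
  have hne : R ≠ [] := by
    rw [hRdef]
    simp [List.range_add]
  have hch : List.Chain' (fun a b : ℕ × ℕ => a.2 ≠ b.2) R := by
    show List.IsChain _ _
    rw [hRdef, List.isChain_map, show 2 * n + 2 = (2 * n + 1) + 1 by ring,
      List.isChain_range_succ]
    intro m hm
    show (f m).2 ≠ (f (m + 1)).2
    rw [hf]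
    simp only
    omega
  rw [signRuns, hA, splitBy_runs R hne hch]
  have hlen : (R.map rep).map List.length
      = (List.range (2 * n + 2)).map (fun i => (f i).1 + 1) := by
    rw [hRdef, List.map_map, List.map_map]
    apply List.map_congr_left
    intro i _
    simp [rep]
  rw [hlen, show 2 * n + 2 = (n + 1) + (n + 1) by ring, List.range_add,
    List.range_succ]
  simp only [List.map_append, List.map_map, List.map_cons, List.map_nil,
    List.append_assoc]
  have e1 : List.map (fun i => (if i = n ∨ i = 2 * n + 1 then 1 else 2) + 1)
      (List.range n) = List.replicate n 3 := by
    rw [List.eq_replicate_iff]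
    refine ⟨by simp, ?_⟩
    intro b hb
    simp only [List.mem_map, List.mem_range] at hb
    obtain ⟨k, hk, rfl⟩ := hb
    rw [if_neg (by omega : ¬(k = n ∨ k = 2 * n + 1))]
  have e3 : List.map ((fun i => (if i = n ∨ i = 2 * n + 1 then 1 else 2) + 1)
        ∘ fun x => n + 1 + x) (List.range n) = List.replicate n 3 := by
    rw [List.eq_replicate_iff]
    refine ⟨by simp, ?_⟩
    intro b hb
    simp only [List.mem_map, List.mem_range] at hb
    obtain ⟨k, hk, rfl⟩ := hb
    show (if n + 1 + k = n ∨ n + 1 + k = 2 * n + 1 then 1 else 2) + 1 = 3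
    rw [if_neg (by omega : ¬(n + 1 + k = n ∨ n + 1 + k = 2 * n + 1))]
  rw [e1, e3, show (f n).1 + 1 = 2
      from by rw [hf]; dsimp only; rw [if_pos (Or.inl rfl)],
    show (f (n + 1 + n)).1 + 1 = 2
      from by rw [hf]; dsimp only; rw [if_pos (Or.inr (by omega))]]
end

section
/- For r = n/(2n+1) with n ≥ 2 an integer (so r = [2,n] as a continued fraction), the S-sequence S(r) equals (3, (n−1)⟨2⟩, 3, (n−1)⟨2⟩), i.e., the run-length sequence of the exponent signs of u_r is 3 followed by n−1 twos, then 3 followed by n−1 twos. -/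
namespace SseqAux

open List

lemma loop_replicate (v : ℕ) (k : ℕ) (l g : List ℕ) (gs : List (List ℕ)) :
    splitBy.loop (·==·) (replicate k v ++ l) v g gs =
      splitBy.loop (·==·) l v (replicate k v ++ g) gs := by
  induction k generalizing g with
  | zero => simp
  | succ k IH =>
    rw [replicate_succ, cons_append, splitBy.loop]
    simp only [beq_self_eq_true]
    rw [IH]
    congr 1
    rw [← singleton_append, ← append_assoc, ← replicate_succ', replicate_succ, cons_append]

def runF (p : ℕ × ℕ) : List ℕ := replicate (p.2 + 1) p.1

lemma loop_runs (rs : List (ℕ × ℕ)) (hch : rs.Chain' (fun p q => p.1 ≠ q.1)) :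
    ∀ v (g : List ℕ) (gs : List (List ℕ)), (∀ p ∈ rs.head?, p.1 ≠ v) →
    splitBy.loop (·==·) ((rs.map runF).flatten) v g gs =
      gs.reverse ++ (v :: g).reverse :: rs.map runF := by
  induction rs with
  | nil => intro v g gs _; simp [splitBy.loop]
  | cons p rs IH =>
    intro v g gs hv
    obtain ⟨w, k⟩ := p
    have hwv : w ≠ v := hv (w, k) rfl
    simp only [map_cons, flatten_cons, runF]
    rw [replicate_succ, cons_append, splitBy.loop]
    have hb : ((v == w) = false) := by simp [Ne.symm hwv]
    simp only [hb, Bool.false_eq_true, if_false]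
    rw [loop_replicate]
    rw [IH (isChain_cons.mp hch).2 w _ _ ?_]
    · simp [runF, ← replicate_succ', ← replicate_succ]
    · intro q hq
      exact ((isChain_cons.mp hch).1 q hq).symm

lemma splitBy_runs (rs : List (ℕ × ℕ)) (hch : rs.Chain' (fun p q => p.1 ≠ q.1)) :
    ((rs.map runF).flatten).splitBy (·==·) = rs.map runF := by
  cases rs with
  | nil => simp
  | cons p rs =>
    obtain ⟨v, k⟩ := p
    simp only [map_cons, flatten_cons, runF]
    rw [replicate_succ, cons_append, splitBy]
    rw [loop_replicate]
    rw [loop_runs rs (isChain_cons.mp hch).2 v _ _ ?_]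
    · simp [runF, ← replicate_succ', ← replicate_succ]
    · intro q hq
      exact ((isChain_cons.mp hch).1 q hq).symm

lemma d1 (n k : ℕ) (h : k ≤ n) : (2*k+1)*n/(2*n+1) = k :=
  Nat.div_eq_of_lt_le (by nlinarith) (by nlinarith)

lemma d2 (n k : ℕ) (h1 : 1 ≤ k) (h2 : k ≤ 2*n+1) : 2*k*n/(2*n+1) = k-1 := by
  obtain ⟨m, rfl⟩ : ∃ m, k = m + 1 := ⟨k-1, by omega⟩
  have hm : m ≤ 2*n := by omega
  simpa using Nat.div_eq_of_lt_le (m := 2*(m+1)*n) (k := m) (by nlinarith) (by nlinarith)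

lemma d3 (n k : ℕ) (h1 : n < k) (h2 : k ≤ 3*n+1) : (2*k+1)*n/(2*n+1) = k-1 := by
  obtain ⟨m, rfl⟩ : ∃ m, k = m + 1 := ⟨k-1, by omega⟩
  have h1' : n ≤ m := by omega
  have h2' : m ≤ 3*n := by omega
  simpa using Nat.div_eq_of_lt_le (m := (2*(m+1)+1)*n) (k := m) (by nlinarith) (by nlinarith)

lemma map_range_two_mul (k : ℕ) (h w : ℕ → ℕ) (H : ∀ i < k, h (2*i) = w i ∧ h (2*i+1) = w i) :
    (range (2*k)).map h = ((range k).map fun i => replicate 2 (w i)).flatten := by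
  induction k with
  | zero => simp
  | succ k IH =>
    rw [show 2*(k+1) = (2*k+1)+1 by ring, range_succ, range_succ, range_succ]
    rw [map_append, map_append, map_append, flatten_append]
    rw [IH (fun i hi => H i (by omega))]
    have h1 := (H k (by omega)).1
    have h2 := (H k (by omega)).2
    simp [h1, h2]

def Rlist (n : ℕ) : List (ℕ × ℕ) :=
  (0,2) :: (((range (n-1)).map fun i => ((1+i)%2, 1)) ++
    (n%2,2) :: ((range (n-1)).map fun i => ((n+1+i)%2, 1)))

lemma chain_Rlist (n : ℕ) (hn : 2 ≤ n) :
    (Rlist n).Chain' (fun p q => p.1 ≠ q.1) := by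
  obtain ⟨m, rfl⟩ : ∃ m, n = m + 2 := ⟨n-2, by omega⟩
  have hm1 : m + 2 - 1 = m + 1 := by omega
  unfold Rlist
  rw [hm1]
  have hchA : ∀ c : ℕ, Chain' (fun p q : ℕ × ℕ => p.1 ≠ q.1)
      ((range (m+1)).map fun i => ((c+i)%2, 1)) := by
    intro c
    unfold Chain'
    rw [isChain_map, show m + 1 = Nat.succ m from rfl, isChain_range_succ]
    intro i _
    simp only [ne_eq, Prod.mk.injEq, not_and]
    intro h
    omega
  unfold Chain'
  rw [isChain_cons, isChain_append]
  refine ⟨?_, hchA 1, ?_, ?_⟩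
  · intro b hb
    rw [range_succ_eq_map, map_cons, head?_append, head?_cons] at hb
    simp only [Option.some_or, Option.mem_some_iff] at hb
    subst hb
    simp
  · rw [isChain_cons]
    refine ⟨?_, hchA (m+2+1)⟩
    intro b hb
    rw [range_succ_eq_map, map_cons, head?_cons] at hb
    simp only [Option.mem_some_iff] at hb
    subst hb
    simp only [ne_eq, Prod.mk.injEq, not_and]
    intro h
    omega
  · intro x hx y hy
    rw [range_succ, map_append, map_singleton, getLast?_concat] at hx
    rw [head?_cons] at hy
    simp only [Option.mem_some_iff] at hx hy
    subst hx; subst hy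
    simp only [ne_eq, Prod.mk.injEq, not_and]
    intro h
    omega


lemma flatten_Rlist (n : ℕ) (hn : 2 ≤ n) :
    (range (2*(2*n+1))).map (fun j => j*n/(2*n+1) % 2) = ((Rlist n).map runF).flatten := by
  have hrhs : ((Rlist n).map runF).flatten =
      replicate 3 0 ++ (((range (n-1)).map fun i => replicate 2 ((1+i)%2)).flatten ++
        (replicate 3 (n%2) ++ ((range (n-1)).map fun i => replicate 2 ((n+1+i)%2)).flatten)) := by
    simp [Rlist, runF, Function.comp_def]
  rw [hrhs]
  rw [show 2*(2*n+1) = 3 + (2*(n-1) + (3 + 2*(n-1))) by omega]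
  rw [range_add, map_append, range_add, map_append, range_add, map_append]
  simp only [map_map, map_append]
  congr 1
  · simp only [show range 3 = [0,1,2] from rfl, map_cons, map_nil]
    have h1 : 1*n/(2*n+1) = 0 := Nat.div_eq_of_lt (by omega)
    have h2 : 2*n/(2*n+1) = 0 := Nat.div_eq_of_lt (by omega)
    have h1' : n/(2*n+1) = 0 := Nat.div_eq_of_lt (by omega)
    simp [h1, h2, h1']
  congr 1
  · apply map_range_two_mul
    intro i hi
    simp only [Function.comp]
    constructor
    · rw [show 3+2*i = 2*(i+1)+1 from by ring, d1 n (i+1) (by omega)]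
      omega
    · rw [show 3+(2*i+1) = 2*(i+2) from by ring, d2 n (i+2) (by omega) (by omega)]
      omega
  congr 1
  · simp only [show range 3 = [0,1,2] from rfl, map_cons, map_nil, Function.comp]
    have h1 : 3+(2*(n-1)+0) = 2*n+1 := by omega
    have h2 : 3+(2*(n-1)+1) = 2*(n+1) := by omega
    have h3 : 3+(2*(n-1)+2) = 2*(n+1)+1 := by omega
    rw [h1, h2, h3, d1 n n (le_refl n), d2 n (n+1) (by omega) (by omega),
      d3 n (n+1) (by omega) (by omega)]
    simp [replicate]
  · apply map_range_two_mul
    intro i hi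
    simp only [Function.comp]
    constructor
    · rw [show 3+(2*(n-1)+(3+2*i)) = 2*(n+2+i) from by omega,
        d2 n (n+2+i) (by omega) (by omega)]
      omega
    · rw [show 3+(2*(n-1)+(3+(2*i+1))) = 2*(n+2+i)+1 from by omega,
        d3 n (n+2+i) (by omega) (by omega)]
      omega

end SseqAux

/-- for `r = n/(2n+1)` with `n ≥ 2`,
`S(r) = (3, (n−1)⟨2⟩, 3, (n−1)⟨2⟩)`. -/
theorem Sseq_2_n (n : ℕ) (hn : 2 ≤ n) :
    signRuns (2 * n + 1) n =
      3 :: (List.replicate (n - 1) 2 ++ 3 :: List.replicate (n - 1) 2) := by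
  unfold signRuns
  rw [SseqAux.flatten_Rlist n hn, SseqAux.splitBy_runs _ (SseqAux.chain_Rlist n hn), List.map_map]
  simp only [SseqAux.Rlist, SseqAux.runF, List.map_cons, List.map_append, List.map_map,
    Function.comp_def, List.length_replicate]
  simp [SseqAux.runF, List.map_const', List.length_range]
end

section
/- Let 0 < r < 1 be rational. The sequence S(r) admits a decomposition S(r) = (S_1, S_2, S_1, S_2) where each S_i is a palindrome (equal to its reverse); moreover if r = [m_1,...,m_k] with k ≥ 2 then S_1 begins and ends with m_1 + 1 and S_2 begins and ends with m_1. -/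
namespace SPD



theorem rep_pull {α : Type*} (n : ℕ) (v : α) (g : List α) :
    List.replicate n v ++ v :: g = v :: (List.replicate n v ++ g) := by
  induction n with
  | zero => rfl
  | succ n ih => simp [List.replicate_succ, ih]

theorem loop_base {α : Type*} (R : α → α → Bool) (a : α) (g : List α) (gs : List (List α)) :
    List.splitBy.loop R [] a g gs = ((a :: g).reverse :: gs).reverse := rfl

theorem loop_acc {α : Type*} (R : α → α → Bool) (l : List α) (a : α) (g : List α)
    (gs : List (List α)) :
    List.splitBy.loop R l a g gs = gs.reverse ++ List.splitBy.loop R l a g [] := by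
  induction l generalizing a g gs with
  | nil => simp [loop_base]
  | cons b l ih =>
    rw [List.splitBy.loop, List.splitBy.loop]
    cases R a b with
    | true => dsimp only; rw [ih]
    | false =>
      dsimp only
      rw [ih, ih b [] [(a :: g).reverse]]
      simp

theorem loop_replicate {α : Type*} (R : α → α → Bool) (hR : ∀ x, R x x = true)
    (n : ℕ) (v : α) (l : List α) (g : List α) (gs : List (List α)) :
    List.splitBy.loop R (List.replicate n v ++ l) v g gs
      = List.splitBy.loop R l v (List.replicate n v ++ g) gs := by
  induction n generalizing g with
  | zero => simp
  | succ n ih =>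
    rw [List.replicate_succ, List.cons_append, List.splitBy.loop, hR]
    dsimp only
    rw [ih, rep_pull, List.cons_append]

theorem splitBy_replicate_append {α : Type*} (R : α → α → Bool) (hR : ∀ x, R x x = true)
    (n : ℕ) (hn : 0 < n) (v : α) (l : List α)
    (hl : ∀ a ∈ l.head?, R v a = false) :
    (List.replicate n v ++ l).splitBy R = List.replicate n v :: l.splitBy R := by
  obtain ⟨m, rfl⟩ : ∃ m, n = m + 1 := ⟨n - 1, by omega⟩
  rw [List.replicate_succ, List.cons_append, List.splitBy, loop_replicate R hR]
  cases l with
  | nil =>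
    rw [loop_base]
    simpa using rep_pull m v []
  | cons a l' =>
    simp only [List.head?_cons, Option.mem_some_iff, forall_eq] at hl
    rw [List.splitBy.loop, hl a rfl]
    dsimp only
    rw [loop_acc]
    have h1 : ((v :: List.replicate m v) : List α).reverse = v :: List.replicate m v := by
      rw [← List.replicate_succ, List.reverse_replicate]
    simp [h1, List.splitBy, ← List.replicate_succ]

theorem splitBy_flatten_blocks {α : Type*} [BEq α] [LawfulBEq α] (B : List (ℕ × α))
    (h1 : ∀ b ∈ B, 0 < b.1) (h2 : B.Chain' (fun x y => x.2 ≠ y.2)) :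
    ((B.map fun b => List.replicate b.1 b.2).flatten).splitBy (· == ·)
      = B.map fun b => List.replicate b.1 b.2 := by
  induction B with
  | nil => rfl
  | cons b B ih =>
    simp only [List.map_cons, List.flatten_cons]
    have hstep := splitBy_replicate_append (α := α) (· == ·) (fun x => beq_self_eq_true x)
      b.1 (h1 b (by simp)) b.2 ((B.map fun b => List.replicate b.1 b.2).flatten) ?_
    · rw [hstep, ih (fun x hx => h1 x (by simp [hx])) h2.tail]
    · intro a ha
      cases B with
      | nil => simp at ha
      | cons c B =>
        obtain ⟨k, hk⟩ : ∃ k, c.1 = k + 1 := ⟨c.1 - 1, by have := h1 c (by simp); omega⟩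
        have hac : a = c.2 := by
          simp only [List.map_cons, List.flatten_cons, hk, List.replicate_succ,
            List.cons_append, List.head?_cons, Option.mem_some_iff] at ha
          exact ha.symm
        subst hac
        have := List.isChain_cons_cons.mp h2 |>.1
        simpa using this




/-- ceiling of `i*p/q` -/
def cst (p q i : ℕ) : ℕ := (i * p + q - 1) / q

def Tlist (p q : ℕ) : List ℕ := (List.range q).map fun i => cst p q (i+1) - cst p q i

theorem cst_le_iff {p q : ℕ} (hq : 0 < q) (i j : ℕ) : cst p q i ≤ j ↔ i * p ≤ j * q := by
  rw [cst, Nat.div_le_iff_le_mul_add_pred hq, Nat.mul_comm q j]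
  omega

theorem cst_zero {p q : ℕ} (hq : 0 < q) : cst p q 0 = 0 := by
  simp [cst, Nat.div_eq_of_lt, hq]

theorem cst_mono {p q : ℕ} (i : ℕ) : cst p q i ≤ cst p q (i+1) :=
  Nat.div_le_div_right (by rw [add_mul, one_mul]; omega)

theorem cst_lt {p q : ℕ} (hq : 0 < q) (hqp : q < p) (i : ℕ) : cst p q i < cst p q (i+1) := by
  rcases Nat.lt_or_ge (cst p q i) (cst p q (i+1)) with h | h
  · exact h
  · exfalso
    have h2 := (cst_le_iff hq (i+1) (cst p q i)).mp h
    have h3 : cst p q i * q ≤ i * p + q - 1 := by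
      have := Nat.div_mul_le_self (i * p + q - 1) q
      simpa [cst] using this
    rw [add_mul, one_mul] at h2
    omega

theorem cst_shift {p q : ℕ} (hq : 0 < q) (i : ℕ) : cst p q (q + i) = p + cst p q i := by
  have : (q + i) * p + q - 1 = q * p + (i * p + q - 1) := by rw [add_mul]; omega
  rw [cst, this, Nat.mul_add_div hq, cst]

theorem div_eq_of_block {p q : ℕ} (hp : 0 < p) (hq : 0 < q) (m j : ℕ)
    (h1 : cst p q m ≤ j) (h2 : j < cst p q (m+1)) : j * q / p = m := by
  apply Nat.div_eq_of_lt_le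
  · exact (cst_le_iff hq m j).mp h1
  · by_contra hcon
    push_neg at hcon
    have := (cst_le_iff hq (m+1) j).mpr hcon
    omega

theorem map_g_eq {p q : ℕ} (hp : 0 < p) (hq : 0 < q) (m : ℕ) :
    (List.range (cst p q m)).map (fun j => (j * q / p) % 2)
      = ((List.range m).map fun i => List.replicate (cst p q (i+1) - cst p q i) (i % 2)).flatten := by
  induction m with
  | zero => simp [cst_zero hq]
  | succ m ih =>
    have hmono := cst_mono (p := p) (q := q) m
    rw [show cst p q (m+1) = cst p q m + (cst p q (m+1) - cst p q m) by omega,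
      List.range_add, List.map_append, ih, List.range_succ, List.map_append,
      List.flatten_append]
    congr 1
    simp only [List.map_cons, List.map_nil, List.flatten_cons, List.flatten_nil,
      List.append_nil, List.map_map]
    rw [List.eq_replicate_iff]
    constructor
    · simp
    · intro b hb
      simp only [List.mem_map, List.mem_range, Function.comp] at hb
      obtain ⟨t, ht, rfl⟩ := hb
      have : (cst p q m + t) * q / p = m :=
        div_eq_of_block hp hq m _ (by omega) (by omega)
      rw [this]

theorem signRuns_eq {p q : ℕ} (hq : 0 < q) (hqp : q < p) :
    signRuns p q = Tlist p q ++ Tlist p q := by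
  have hp : 0 < p := lt_trans hq hqp
  have h2p : cst p q (2*q) = 2*p := by
    have : 2 * q * p + q - 1 = q * (2*p) + (q - 1) := by rw [show 2*q*p = q*(2*p) by ring]; omega
    rw [cst, this, Nat.mul_add_div hq, Nat.div_eq_of_lt (by omega)]
    omega
  rw [signRuns, ← h2p, map_g_eq hp hq]
  have hB := splitBy_flatten_blocks ((List.range (2*q)).map fun i => (cst p q (i+1) - cst p q i, i % 2))
    (by
      intro b hb
      simp only [List.mem_map, List.mem_range] at hb
      obtain ⟨i, hi, rfl⟩ := hb
      have := cst_lt hq hqp i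
      simpa using this)
    (by
      unfold List.Chain'
      rw [List.isChain_map]
      obtain ⟨s, hs⟩ : ∃ s, 2 * q = s + 1 := ⟨2*q - 1, by omega⟩
      rw [hs]
      rw [show (s+1) = Nat.succ s from rfl, List.isChain_range_succ]
      intro i hi
      simp only [ne_eq]
      omega)
  simp only [List.map_map] at hB
  have hcomp : ((fun b : ℕ × ℕ => List.replicate b.1 b.2) ∘ fun i => (cst p q (i+1) - cst p q i, i % 2))
      = fun i => List.replicate (cst p q (i+1) - cst p q i) (i % 2) := rfl
  rw [hcomp] at hB
  rw [hB]
  rw [List.map_map, show 2*q = q + q by ring, List.range_add, List.map_append]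
  congr 1
  · rw [Tlist]
    apply List.map_congr_left
    intro i hi
    simp
  · rw [List.map_map, Tlist]
    apply List.map_congr_left
    intro i hi
    simp only [Function.comp]
    rw [show q + i + 1 = q + (i+1) by ring, cst_shift hq, cst_shift hq]
    simp [List.length_replicate]
    omega



theorem ceil_div {q : ℕ} (hq : 0 < q) (x : ℕ) :
    (x + q - 1) / q = x / q + (if x % q = 0 then 0 else 1) := by
  have h := Nat.div_add_mod x q
  have hr : x % q < q := Nat.mod_lt _ hq
  rw [show x + q - 1 = q * (x / q) + (x % q + q - 1) by omega, Nat.mul_add_div hq]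
  by_cases h0 : x % q = 0
  · rw [if_pos h0, h0, Nat.div_eq_of_lt (show 0 + q - 1 < q by omega)]
  · rw [if_neg h0,
      Nat.div_eq_of_lt_le (show 1 * q ≤ x % q + q - 1 by omega)
        (show x % q + q - 1 < (1+1) * q by omega)]

theorem lenT_eq {p q : ℕ} (hq : 0 < q) (hu0 : 0 < p % q) (i : ℕ) :
    cst p q (i+1) - cst p q i
      = p / q + (if (i*p) % q = 0 ∨ q - p % q < (i*p) % q then 1 else 0) := by
  have hu : p % q < q := Nat.mod_lt _ hq
  have ha : (i*p) % q < q := Nat.mod_lt _ hq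
  have hu0 : 0 ≤ p % q := Nat.zero_le _
  have hexp : (i+1) * p = q * ((i*p)/q + p/q) + ((i*p) % q + p % q) := by
    have h1 := Nat.div_add_mod (i*p) q
    have h2 := Nat.div_add_mod p q
    rw [add_mul, one_mul, Nat.mul_add]
    omega
  have hdiv : ((i+1)*p) / q = (i*p)/q + p/q + ((i*p)%q + p%q)/q := by
    rw [hexp, Nat.mul_add_div hq]
  have hmod : ((i+1)*p) % q = ((i*p)%q + p%q) % q := by rw [hexp, Nat.mul_add_mod]
  rw [cst, cst, ceil_div hq, ceil_div hq, hdiv, hmod]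
  rcases Nat.lt_or_ge ((i*p)%q + p%q) q with hc | hc
  · rw [Nat.div_eq_of_lt hc, Nat.mod_eq_of_lt hc]
    clear hexp hdiv hmod
    generalize (i*p)/q = D at *
    generalize p/q = M at *
    generalize (i*p)%q = A at *
    generalize p%q = U at *
    split_ifs <;> omega
  · rw [Nat.div_eq_of_lt_le (show 1 * q ≤ (i*p) % q + p % q by omega)
        (show (i*p) % q + p % q < (1+1) * q by omega), Nat.mod_eq_sub_mod hc,
      Nat.mod_eq_of_lt (show (i*p) % q + p % q - q < q by omega)]
    clear hexp hdiv hmod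
    generalize (i*p)/q = D at *
    generalize p/q = M at *
    generalize (i*p)%q = A at *
    generalize p%q = U at *
    split_ifs <;> omega

theorem upos {p q : ℕ} (hq : 2 ≤ q) (hcop : Nat.Coprime p q) : 0 < p % q := by
  rcases Nat.eq_zero_or_pos (p % q) with h | h
  · exfalso
    have hdvd : q ∣ p := Nat.dvd_of_mod_eq_zero h
    have h1 : q ∣ 1 := hcop ▸ Nat.dvd_gcd hdvd dvd_rfl
    have := Nat.le_of_dvd one_pos h1
    omega
  · exact h

theorem chi_of_modeq {p q : ℕ} (hq : 2 ≤ q) (hcop : Nat.Coprime p q) (i : ℕ)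
    (h : ((i*p) % q + p % q) % q = 1) :
    (i*p) % q = 0 ∨ q - p % q < (i*p) % q := by
  have ha : (i*p) % q < q := Nat.mod_lt _ (by omega)
  have hu : p % q < q := Nat.mod_lt _ (by omega)
  have hu0 := upos hq hcop
  obtain ⟨k, hk2, hks⟩ : ∃ k, k < 2 ∧ q * k + 1 = (i*p) % q + p % q := by
    refine ⟨((i*p) % q + p % q)/q, (Nat.div_lt_iff_lt_mul (by omega)).mpr (by omega), ?_⟩
    have := Nat.div_add_mod ((i*p) % q + p % q) q
    omega
  interval_cases k <;> omega

theorem notchi_of_modeq {p q : ℕ} (hq : 2 ≤ q) (hcop : Nat.Coprime p q) (i : ℕ)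
    (h : ((i*p) % q + p % q) % q = 0) :
    ¬ ((i*p) % q = 0 ∨ q - p % q < (i*p) % q) := by
  have ha : (i*p) % q < q := Nat.mod_lt _ (by omega)
  have hu : p % q < q := Nat.mod_lt _ (by omega)
  have hu0 := upos hq hcop
  obtain ⟨k, hk2, hks⟩ : ∃ k, k < 2 ∧ q * k = (i*p) % q + p % q := by
    refine ⟨((i*p) % q + p % q)/q, (Nat.div_lt_iff_lt_mul (by omega)).mpr (by omega), ?_⟩
    have := Nat.div_add_mod ((i*p) % q + p % q) q
    omega
  interval_cases k <;> omega

theorem chi_symm {p q : ℕ} (hq : 2 ≤ q) (hcop : Nat.Coprime p q) (i j : ℕ)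
    (hij : ((i + j + 1) * p) % q = 1) :
    ((i*p) % q = 0 ∨ q - p % q < (i*p) % q) ↔ ((j*p) % q = 0 ∨ q - p % q < (j*p) % q) := by
  have ha : (i*p) % q < q := Nat.mod_lt _ (by omega)
  have hb : (j*p) % q < q := Nat.mod_lt _ (by omega)
  have hu : p % q < q := Nat.mod_lt _ (by omega)
  have hu0 := upos hq hcop
  rw [show (i + j + 1) * p = i*p + j*p + p by ring] at hij
  have key : ((i*p) % q + (j*p) % q + p % q) % q = 1 := by
    have hmq : (i*p) % q + (j*p) % q + p % q ≡ i*p + j*p + p [MOD q] :=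
      ((Nat.mod_modEq _ _).add (Nat.mod_modEq _ _)).add (Nat.mod_modEq _ _)
    have h2 : ((i*p) % q + (j*p) % q + p % q) % q = (i*p + j*p + p) % q := hmq
    exact h2.trans hij
  obtain ⟨k, hk3, hks⟩ : ∃ k, k < 3 ∧ q * k + 1 = (i*p) % q + (j*p) % q + p % q := by
    refine ⟨((i*p) % q + (j*p) % q + p % q)/q, (Nat.div_lt_iff_lt_mul (by omega)).mpr (by omega), ?_⟩
    have := Nat.div_add_mod ((i*p) % q + (j*p) % q + p % q) q
    omega
  interval_cases k <;> omega

theorem exists_inv {p q : ℕ} (hq : 2 ≤ q) (hcop : Nat.Coprime p q) :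
    ∃ l, 1 ≤ l ∧ l < q ∧ (l * p) % q = 1 := by
  haveI : NeZero q := ⟨by omega⟩
  haveI : Fact (1 < q) := ⟨by omega⟩
  set l := ((p : ZMod q)⁻¹).val with hl
  have hmod : (l * p) % q = 1 := by
    have hcast : ((l * p : ℕ) : ZMod q) = 1 := by
      push_cast
      rw [hl, ZMod.natCast_val, ZMod.cast_id]
      rw [mul_comm]
      exact ZMod.coe_mul_inv_eq_one p hcop
    have := congrArg ZMod.val hcast
    rwa [ZMod.val_natCast, ZMod.val_one] at this
  refine ⟨l, ?_, ZMod.val_lt _, hmod⟩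
  rcases Nat.eq_zero_or_pos l with h | h
  · rw [h] at hmod; simp at hmod
  · exact h

theorem Tlist_decomp {p q : ℕ} (hq : 2 ≤ q) (hqp : q < p) (hcop : Nat.Coprime p q) :
    ∃ S1 S2 : List ℕ, Tlist p q = S1 ++ S2 ∧ S1.reverse = S1 ∧ S2.reverse = S2 ∧
      S1.head? = some (p / q + 1) ∧ S1.getLast? = some (p / q + 1) ∧
      S2.head? = some (p / q) ∧ S2.getLast? = some (p / q) := by
  obtain ⟨l, hl1, hlq, hinv⟩ := exists_inv hq hcop
  obtain ⟨l', rfl⟩ : ∃ l', l = l' + 1 := ⟨l - 1, by omega⟩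
  set l := l' + 1 with hldef
  have hq0 : 0 < q := by omega
  have hu0 : 0 < p % q := upos hq hcop
  have huq : p % q < q := Nat.mod_lt _ hq0
  have hTlen : (Tlist p q).length = q := by simp [Tlist]
  have hTget : ∀ (i : ℕ) (h : i < (Tlist p q).length),
      (Tlist p q)[i] = p / q + (if (i*p) % q = 0 ∨ q - p % q < (i*p) % q then 1 else 0) := by
    intro i h
    simp only [Tlist, List.getElem_map, List.getElem_range]
    exact lenT_eq hq0 hu0 i
  have hlen1 : ((Tlist p q).take l).length = l := by
    rw [List.length_take, hTlen]; omega
  have hlen2 : ((Tlist p q).drop l).length = q - l := by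
    rw [List.length_drop, hTlen]
  refine ⟨(Tlist p q).take l, (Tlist p q).drop l, (List.take_append_drop _ _).symm,
    ?_, ?_, ?_, ?_, ?_, ?_⟩
  · -- S1 palindrome
    apply List.ext_getElem?
    intro n
    by_cases hn : n < l
    · rw [List.getElem?_reverse (by rw [hlen1]; exact hn), hlen1,
        List.getElem?_take, if_pos (by omega), List.getElem?_take, if_pos hn,
        List.getElem?_eq_getElem (by omega), List.getElem?_eq_getElem (by omega),
        hTget _ (by omega), hTget _ (by omega)]
      have hiff := chi_symm hq hcop (l - 1 - n) n
        (by rw [show (l - 1 - n) + n + 1 = l by omega]; exact hinv)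
      simp only [hiff]
    · rw [List.getElem?_eq_none (by rw [List.length_reverse, hlen1]; omega),
        List.getElem?_eq_none (by rw [hlen1]; omega)]
  · -- S2 palindrome
    apply List.ext_getElem?
    intro n
    by_cases hn : n < q - l
    · rw [List.getElem?_reverse (by rw [hlen2]; exact hn), hlen2,
        List.getElem?_drop, List.getElem?_drop,
        List.getElem?_eq_getElem (by omega), List.getElem?_eq_getElem (by omega),
        hTget _ (by omega), hTget _ (by omega)]
      have hiff := chi_symm hq hcop (l + (q - l - 1 - n)) (l + n)
        (by rw [show (l + (q - l - 1 - n)) + (l + n) + 1 = l + q by omega, add_mul,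
             mul_comm q p, Nat.add_mul_mod_self_right]; exact hinv)
      simp only [hiff]
    · rw [List.getElem?_eq_none (by rw [List.length_reverse, hlen2]; omega),
        List.getElem?_eq_none (by rw [hlen2]; omega)]
  · -- S1 head
    rw [List.head?_eq_getElem?, List.getElem?_eq_getElem (by omega),
      List.getElem_take, hTget _ (by omega)]
    rw [if_pos (Or.inl (by simp))]
  · -- S1 last
    rw [List.getLast?_eq_getElem?, hlen1, List.getElem?_take, if_pos (by omega),
      List.getElem?_eq_getElem (by omega), hTget _ (by omega)]
    rw [if_pos (chi_of_modeq hq hcop (l - 1)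
      (by
        rw [← Nat.add_mod, show l - 1 = l' from rfl, ← Nat.succ_mul]
        exact hinv))]
  · -- S2 head
    rw [List.head?_eq_getElem?, List.getElem?_drop, Nat.add_zero,
      List.getElem?_eq_getElem (by omega), hTget _ (by omega), hinv,
      if_neg (by omega)]
    rfl
  · -- S2 last
    rw [List.getLast?_eq_getElem?, hlen2, List.getElem?_drop,
      List.getElem?_eq_getElem (by omega), hTget _ (by omega),
      if_neg (notchi_of_modeq hq hcop (l + (q - l - 1))
        (by
          rw [← Nat.add_mod, ← Nat.succ_mul, show (l + (q - l - 1)).succ = q by omega,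
            Nat.mul_mod_right]))]
    rfl

theorem Tlist_one {p : ℕ} (hp : 0 < p) : Tlist p 1 = [p] := by
  rw [Tlist, show List.range 1 = [0] from rfl]
  simp [cst]

theorem contFrac_pos_lt : ∀ (L : List ℕ), L ≠ [] → (∀ x ∈ L, 0 < x) →
    (∀ x ∈ L.getLast?, 2 ≤ x) → 0 < contFrac L ∧ contFrac L < 1 := by
  intro L
  induction L with
  | nil => intro h; exact absurd rfl h
  | cons m L ih =>
    intro _ hpos hlast
    cases L with
    | nil =>
      have hm : 2 ≤ m := hlast m (by simp)
      have hm' : (2:ℚ) ≤ (m:ℚ) := by exact_mod_cast hm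
      have hC : contFrac [m] = 1/((m:ℚ) + 0) := rfl
      rw [hC, add_zero]
      constructor
      · apply one_div_pos.mpr; linarith
      · rw [div_lt_one (by linarith)]; linarith
    | cons m2 L2 =>
      have h2 := ih (by simp) (fun x hx => hpos x (by simp [hx]))
        (by intro x hx; exact hlast x (by rwa [List.getLast?_cons_cons]))
      have hm : 1 ≤ m := hpos m (by simp)
      have hm' : (1:ℚ) ≤ (m:ℚ) := by exact_mod_cast hm
      obtain ⟨hc0, hc1⟩ := h2
      have hC : contFrac (m :: m2 :: L2) = 1/((m:ℚ) + contFrac (m2 :: L2)) := rfl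
      rw [hC]
      constructor
      · apply one_div_pos.mpr; linarith
      · rw [div_lt_one (by linarith)]; linarith

theorem num_den_facts (L : List ℕ) (hpos : ∀ x ∈ L, 0 < x)
    (hlast : ∀ x ∈ L.getLast?, 2 ≤ x) (hlen : 2 ≤ L.length) (r : ℚ) (hr : r = contFrac L) :
    2 ≤ r.num.toNat ∧ r.den / r.num.toNat = L.headI := by
  obtain ⟨m, L', rfl⟩ : ∃ m L', L = m :: L' := by
    cases L with
    | nil => simp at hlen
    | cons m L' => exact ⟨m, L', rfl⟩
  have hL' : L' ≠ [] := by
    cases L' with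
    | nil => simp at hlen
    | cons a b => simp
  obtain ⟨m2, L2, rfl⟩ : ∃ m2 L2, L' = m2 :: L2 := by
    cases L' with
    | nil => simp at hL'
    | cons a b => exact ⟨a, b, rfl⟩
  set s := contFrac (m2 :: L2) with hs_def
  obtain ⟨hs0, hs1⟩ := contFrac_pos_lt (m2 :: L2) (by simp)
    (fun x hx => hpos x (by simp [hx]))
    (by intro x hx; exact hlast x (by rwa [List.getLast?_cons_cons]))
  have hm : 1 ≤ m := hpos m (by simp)
  have hm' : (1:ℚ) ≤ (m:ℚ) := by exact_mod_cast hm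
  have hms : (0:ℚ) < (m:ℚ) + s := by linarith
  simp only [contFrac] at hr
  have hinv : r⁻¹ = (m:ℚ) + s := by rw [hr, one_div, inv_inv]; rfl
  have h0 : 0 < r := by rw [hr]; exact one_div_pos.mpr hms
  have hnum : 0 < r.num := Rat.num_pos.mpr h0
  have hqcast : ((r.num.toNat : ℚ)) = ((r.num : ℤ) : ℚ) := by
    exact_mod_cast congrArg (fun z : ℤ => (z : ℚ)) (Int.toNat_of_nonneg hnum.le)
  have hinv2 : (r:ℚ)⁻¹ = (r.den : ℚ) / (r.num : ℚ) := by
    conv_lhs => rw [← Rat.num_div_den r]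
    rw [inv_div]
  have hrinv : ((r.den : ℚ)) / (r.num.toNat : ℚ) = (m:ℚ) + s := by
    rw [hqcast, ← hinv2, hinv]
  have hfloor : r.den / r.num.toNat = m := by
    have h1 : r.den / r.num.toNat = ⌊(r.den:ℚ)/(r.num.toNat:ℚ)⌋₊ := by
      rw [Nat.floor_div_eq_div]
    rw [h1, hrinv]
    rw [Nat.floor_eq_iff (by positivity)]
    constructor
    · linarith
    · push_cast; linarith
  have hq2 : 2 ≤ r.num.toNat := by
    by_contra hcon
    have h1 : r.num.toNat = 1 := by omega
    rw [h1] at hrinv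
    simp only [Nat.cast_one, div_one] at hrinv
    have hlow : (m:ℚ) < (r.den:ℚ) := by linarith
    have hhigh : (r.den:ℚ) < (m:ℚ) + 1 := by linarith
    have hlow' : m < r.den := by exact_mod_cast hlow
    have hhigh' : r.den < m + 1 := by exact_mod_cast hhigh
    omega
  exact ⟨hq2, by simpa using hfloor⟩

end SPD

/-- `S(r)` admits a decomposition `(S₁, S₂, S₁, S₂)` with each `Sᵢ` a
palindrome; moreover if `r = [m₁,…,m_k]` with `k ≥ 2` then `S₁` begins and ends with
`m₁ + 1` and `S₂` begins and ends with `m₁`. -/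
theorem Sseq_palindromic_decomposition (L : List ℕ) (hL : L ≠ []) (hpos : ∀ x ∈ L, 0 < x)
    (hlast : ∀ x ∈ L.getLast?, 2 ≤ x) (r : ℚ) (hr : r = contFrac L)
    (h0 : 0 < r) (h1 : r < 1) :
    ∃ S1 S2 : List ℕ, SseqQ r = S1 ++ S2 ++ S1 ++ S2 ∧
      S1.reverse = S1 ∧ S2.reverse = S2 ∧
      (2 ≤ L.length →
        S1.head? = some (L.headI + 1) ∧ S1.getLast? = some (L.headI + 1) ∧
        S2.head? = some L.headI ∧ S2.getLast? = some L.headI) := by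
  have hnum : 0 < r.num := Rat.num_pos.mpr h0
  have hq0 : 0 < r.num.toNat := by omega
  have hden : 0 < r.den := r.pos
  have hqp : r.num.toNat < r.den := by
    rw [← Rat.num_div_den r, div_lt_one (by exact_mod_cast hden)] at h1
    have : r.num < (r.den : ℤ) := by exact_mod_cast h1
    omega
  have hcop : Nat.Coprime r.den r.num.toNat := by
    have h := r.reduced
    have heq : r.num.toNat = r.num.natAbs := by omega
    rw [heq]
    exact h.symm
  have hSseq : SseqQ r = SPD.Tlist r.den r.num.toNat ++ SPD.Tlist r.den r.num.toNat :=
    SPD.signRuns_eq hq0 hqp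
  rcases Nat.lt_or_ge r.num.toNat 2 with hq1 | hq2
  · have hq1' : r.num.toNat = 1 := by omega
    refine ⟨[], SPD.Tlist r.den r.num.toNat, ?_, rfl, ?_, ?_⟩
    · rw [hSseq]; simp
    · rw [hq1', SPD.Tlist_one hden]; simp
    · intro hk
      exfalso
      obtain ⟨h2, _⟩ := SPD.num_den_facts L hpos hlast hk r hr
      omega
  · obtain ⟨S1, S2, hsplit, h1r, h2r, hh1, hl1, hh2, hl2⟩ := SPD.Tlist_decomp hq2 hqp hcop
    refine ⟨S1, S2, ?_, h1r, h2r, ?_⟩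
    · rw [hSseq, hsplit]; simp [List.append_assoc]
    · intro hk
      obtain ⟨_, hhead⟩ := SPD.num_den_facts L hpos hlast hk r hr
      rw [← hhead]
      exact ⟨hh1, hl1, hh2, hl2⟩
end

section
/- Let 0 < r < 1 be rational. The cyclic S-sequence CS(r) is symmetric: the cyclic sequence obtained from CS(r) by reversing its cyclic order is equivalent to CS(r) as a cyclic sequence. -/
namespace CSaux
open List

variable {α : Type*} {R : α → α → Bool}

open List

variable {α : Type*} {R : α → α → Bool}

theorem splitByLoop_eq_append' {l : List α} {a : α} {g : List α}
    (gs : List (List α)) :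
    List.splitBy.loop R l a g gs = gs.reverse ++ List.splitBy.loop R l a g [] := by
  induction l generalizing a g gs with
  | nil => simp [List.splitBy.loop]
  | cons b l IH =>
    simp_rw [List.splitBy.loop]
    split <;> rw [IH]
    conv_rhs => rw [IH]
    simp

theorem splitBy_loop_progress : ∀ (t : List α) (a : α) (g : List α) (rest : List α),
    List.Chain' (fun x y => R x y = true) (a :: t) →
    (rest = [] ∨ ∃ h : rest ≠ [], R ((a :: t).getLast (by simp)) (rest.head h) = false) →
    List.splitBy.loop R (t ++ rest) a g [] = (g.reverse ++ a :: t) :: rest.splitBy R := by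
  intro t
  induction t with
  | nil =>
    intro a g rest _ hrest
    rcases hrest with rfl | ⟨h, hR⟩
    · simp [List.splitBy.loop]
    · cases rest with
      | nil => simp at h
      | cons b l =>
        simp only [List.getLast_singleton, List.head_cons] at hR
        rw [nil_append, List.splitBy.loop, hR]
        rw [splitByLoop_eq_append' [_]]
        simp [List.splitBy]
  | cons c t IH =>
    intro a g rest hch hrest
    have hac : R a c = true := (List.isChain_cons_cons.1 hch).1
    rw [cons_append, List.splitBy.loop, hac]
    rw [IH c (a :: g) rest (List.isChain_cons_cons.1 hch).2 ?_]
    · simp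
    · rcases hrest with rfl | ⟨h, hR⟩
      · exact Or.inl rfl
      · refine Or.inr ⟨h, ?_⟩
        rwa [List.getLast_cons (by simp)] at hR

theorem splitBy_append_chain (g rest : List α) (hg : g ≠ [])
    (hc : List.Chain' (fun x y => R x y = true) g)
    (hrest : rest = [] ∨ ∃ h : rest ≠ [], R (g.getLast hg) (rest.head h) = false) :
    (g ++ rest).splitBy R = g :: rest.splitBy R := by
  cases g with
  | nil => simp at hg
  | cons a t =>
    rw [cons_append]
    show List.splitBy.loop R (t ++ rest) a [] [] = _
    rw [splitBy_loop_progress t a [] rest hc hrest]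
    simp

theorem splitBy_flatten_eq (L : List (List α))
    (h1 : ∀ g ∈ L, g ≠ [])
    (h2 : ∀ g ∈ L, List.Chain' (fun x y => R x y = true) g)
    (h3 : L.Chain' fun a b => ∃ ha hb, R (a.getLast ha) (b.head hb) = false) :
    L.flatten.splitBy R = L := by
  induction L with
  | nil => rfl
  | cons g L IH =>
    rw [flatten_cons,
      splitBy_append_chain g L.flatten (h1 g mem_cons_self) (h2 g mem_cons_self) ?_]
    · rw [IH (fun g hg => h1 g (mem_cons_of_mem _ hg)) (fun g hg => h2 g (mem_cons_of_mem _ hg))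
        ((List.isChain_cons.1 h3).2)]
    · cases L with
      | nil => exact Or.inl rfl
      | cons g' L' =>
        have hg' : g' ≠ [] := h1 g' (by simp)
        have hfl : L'.flatten.length + g'.length = (g' :: L').flatten.length := by
          simp [flatten_cons]; omega
        have hne : (g' :: L').flatten ≠ [] := by
          intro h
          apply hg'
          have := congrArg List.length h
          simp [flatten_cons] at this
          exact this.1
        refine Or.inr ⟨hne, ?_⟩
        obtain ⟨ha, hb, hR⟩ := (List.isChain_cons_cons.1 h3).1
        have hh : (g' :: L').flatten.head hne = g'.head hg' :=
          head_append_of_ne_nil (l := g') (l' := L'.flatten) hg'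
        rw [hh]
        exact hR



theorem head?_flatten_of (L : List (List α)) (hL : ∀ g ∈ L, g ≠ []) (g : List α)
    (h : L.head? = some g) : L.flatten.head? = g.head? := by
  cases L with
  | nil => simp at h
  | cons g' L' =>
    simp only [head?_cons, Option.some.injEq] at h
    subst h
    rw [flatten_cons, head?_append_of_ne_nil _ (hL _ (by simp))]

theorem getLast?_flatten_of (L : List (List α)) (hL : ∀ g ∈ L, g ≠ []) (g : List α)
    (h : L.getLast? = some g) : L.flatten.getLast? = g.getLast? := by
  induction L with
  | nil => simp at h
  | cons g' L' IH =>
    cases L' with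
    | nil =>
      simp only [getLast?_singleton, Option.some.injEq] at h
      subst h
      simp
    | cons g'' L'' =>
      rw [getLast?_cons_cons] at h
      rw [flatten_cons, getLast?_append_of_ne_nil _ ?_]
      · exact IH (fun x hx => hL x (mem_cons_of_mem _ hx)) h
      · intro hfl
        apply hL g'' (by simp)
        have := congrArg List.length hfl
        simp at this
        exact this.1

theorem splitBy_append (a b : List α) (ha : a ≠ []) (hb : b ≠ [])
    (h : R (a.getLast ha) (b.head hb) = false) :
    (a ++ b).splitBy R = a.splitBy R ++ b.splitBy R := by
  have key := splitBy_flatten_eq (R := R) (a.splitBy R ++ b.splitBy R) ?_ ?_ ?_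
  · rwa [flatten_append, flatten_splitBy, flatten_splitBy] at key
  · intro g hg
    rw [mem_append] at hg
    rcases hg with hg | hg <;> exact ne_nil_of_mem_splitBy hg
  · intro g hg
    rw [mem_append] at hg
    rcases hg with hg | hg <;>
      exact isChain_of_mem_splitBy hg
  · rw [List.Chain', List.isChain_append]
    refine ⟨isChain_getLast_head_splitBy _ _, isChain_getLast_head_splitBy _ _, ?_⟩
    intro x hx y hy
    have hx' : x ≠ [] := ne_nil_of_mem_splitBy (List.mem_of_mem_getLast? hx)
    have hy' : y ≠ [] := ne_nil_of_mem_splitBy (List.mem_of_mem_head? hy)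
    refine ⟨hx', hy', ?_⟩
    have e1 : a.getLast? = x.getLast? := by
      have := getLast?_flatten_of (a.splitBy R) (fun g hg => ne_nil_of_mem_splitBy hg) x hx
      rwa [flatten_splitBy] at this
    have e2 : b.head? = y.head? := by
      have := head?_flatten_of (b.splitBy R) (fun g hg => ne_nil_of_mem_splitBy hg) y hy
      rwa [flatten_splitBy] at this
    rw [getLast?_eq_getLast ha, getLast?_eq_getLast hx'] at e1
    rw [head?_eq_head hb, head?_eq_head hy'] at e2
    rw [← Option.some.inj e1, ← Option.some.inj e2]
    exact h

theorem flatten_reverse_map (L : List (List α)) :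
    ((L.map List.reverse).reverse).flatten = L.flatten.reverse := by
  induction L with
  | nil => simp
  | cons g L IH => simp [IH]

theorem splitBy_reverse (hsymm : ∀ x y, R x y = R y x) (l : List α) :
    l.reverse.splitBy R = ((l.splitBy R).map List.reverse).reverse := by
  have key := splitBy_flatten_eq (R := R) ((l.splitBy R).map List.reverse).reverse ?_ ?_ ?_
  · rwa [flatten_reverse_map, flatten_splitBy] at key
  · intro g hg
    simp only [mem_reverse, mem_map] at hg
    obtain ⟨g', hg', rfl⟩ := hg
    simpa using ne_nil_of_mem_splitBy hg'
  · intro g hg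
    simp only [mem_reverse, mem_map] at hg
    obtain ⟨g', hg', rfl⟩ := hg
    rw [List.Chain', List.isChain_reverse]
    have := isChain_of_mem_splitBy hg'
    apply this.imp
    intro x y hxy
    show R y x = true
    rw [hsymm]
    exact hxy
  · rw [List.Chain', List.isChain_reverse, List.isChain_map]
    have := isChain_getLast_head_splitBy R l
    apply this.imp
    intro x y hxy
    obtain ⟨hx, hy, hR⟩ := hxy
    have hyr : y.reverse ≠ [] := by simpa using hy
    have hxr : x.reverse ≠ [] := by simpa using hx
    refine ⟨hyr, hxr, ?_⟩
    rw [List.getLast_reverse, List.head_reverse, hsymm]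
    exact hR



/-- reduce index mod 2p -/
theorem smod (p q x : ℕ) (hp : 0 < p) :
    ((x % (2*p)) * q / p) % 2 = (x * q / p) % 2 := by
  have hx : x * q = (x % (2*p)) * q + (x / (2*p)) * q * 2 * p := by
    conv_lhs => rw [← Nat.mod_add_div x (2*p)]
    ring
  rw [hx, Nat.add_mul_div_right _ _ hp]
  omega

/-- the core symmetry -/
theorem key (p q c : ℕ) (hp : 0 < p) (hq : 0 < q) (hqp : q < p)
    (hc : c * q % (2*p) = p - 1) (j : ℕ) (hj : j < 2*p) :
    (((2*p + c - j) % (2*p)) * q / p) % 2 = (j * q / p) % 2 := by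
  rw [smod _ _ _ hp]
  obtain ⟨X, hXdef⟩ : ∃ X, X = (2*p + c - j) * q := ⟨_, rfl⟩
  rw [← hXdef]
  obtain ⟨m, h2⟩ : ∃ m, c * q + 1 = 2*p*m + p := by
    refine ⟨c * q / (2*p), ?_⟩
    have := Nat.div_add_mod (c*q) (2*p)
    omega
  obtain ⟨d, hd, e, h3, hep⟩ : ∃ d, d = j * q / p ∧ ∃ e, j * q = p * d + e ∧ e < p :=
    ⟨_, rfl, _, (Nat.div_add_mod _ _).symm, Nat.mod_lt _ hp⟩
  obtain ⟨D, hD, E, h4, hEp⟩ : ∃ D, D = X / p ∧ ∃ E, X = p * D + E ∧ E < p :=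
    ⟨_, rfl, _, (Nat.div_add_mod _ _).symm, Nat.mod_lt _ hp⟩
  rw [← hd, ← hD]
  have h1 : X + j * q = 2*(p*q) + c*q := by
    rw [hXdef, ← Nat.add_mul, Nat.sub_add_cancel (by omega)]
    ring
  have h1' : (X:ℤ) + (j:ℤ) * q = 2*((p:ℤ)*q) + (c:ℤ)*q := by exact_mod_cast h1
  have h2' : (c:ℤ) * q + 1 = 2*(p:ℤ)*m + p := by exact_mod_cast h2
  have h3' : (j:ℤ) * q = (p:ℤ) * d + e := by exact_mod_cast h3
  have h4' : (X:ℤ) = (p:ℤ) * D + E := by exact_mod_cast h4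
  have hkey : (p:ℤ) * ((D:ℤ) + d - 2*q - 2*m) = (p:ℤ) - 1 - E - e := by
    linear_combination h1' + h2' - h3' - h4'
  have ht : (D:ℤ) + (d:ℤ) - 2*q - 2*m = 0 := by
    rcases lt_trichotomy ((D:ℤ) + (d:ℤ) - 2*q - 2*m) 0 with h | h | h
    · exfalso
      have h9 : (D:ℤ) + (d:ℤ) - 2*q - 2*m ≤ -1 := by omega
      have h10 : (p:ℤ) * ((D:ℤ) + (d:ℤ) - 2*q - 2*m) ≤ (p:ℤ) * (-1) := by
        apply mul_le_mul_of_nonneg_left h9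
        exact_mod_cast Nat.zero_le p
      rw [hkey] at h10
      omega
    · exact h
    · exfalso
      have h9 : (1:ℤ) ≤ (D:ℤ) + (d:ℤ) - 2*q - 2*m := by omega
      have h10 : (p:ℤ) * 1 ≤ (p:ℤ) * ((D:ℤ) + (d:ℤ) - 2*q - 2*m) := by
        apply mul_le_mul_of_nonneg_left h9
        exact_mod_cast Nat.zero_le p
      rw [hkey] at h10
      omega
  have hDd : D + d = 2*q + 2*m := by
    have : (D:ℤ) + (d:ℤ) = 2*(q:ℤ) + 2*(m:ℤ) := by omega
    exact_mod_cast this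
  omega



theorem exists_c (p q : ℕ) (hq : 0 < q) (hqp : q < p) (hcop : Nat.Coprime q p) :
    ∃ c, c < 2*p ∧ c * q % (2*p) = p - 1 := by
  have hp : 2 ≤ p := by omega
  rcases Nat.even_or_odd q with hqe | hqo
  · -- q even, p odd; solve mod p and lift
    haveI : NeZero p := ⟨by omega⟩
    have hpodd : p % 2 = 1 := by
      rcases Nat.even_or_odd p with hpe | hpo
      · exfalso
        obtain ⟨a, ha⟩ := hqe
        obtain ⟨b, hb⟩ := hpe
        have : 2 ∣ Nat.gcd q p := Nat.dvd_gcd ⟨a, by omega⟩ ⟨b, by omega⟩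
        rw [hcop] at this
        omega
      · exact Nat.odd_iff.1 hpo
    have hu : IsUnit (q : ZMod p) := (ZMod.isUnit_iff_coprime q p).2 hcop
    set c0 : ℕ := (((p - 1 : ℕ) : ZMod p) * (q : ZMod p)⁻¹).val with hc0
    have hcast : ((c0 * q : ℕ) : ZMod p) = ((p - 1 : ℕ) : ZMod p) := by
      push_cast
      rw [hc0, ZMod.natCast_rightInverse _]
      rw [mul_assoc, ZMod.inv_mul_of_unit _ hu, mul_one]
    have hmod : c0 * q % p = p - 1 := by
      have h := (ZMod.natCast_eq_natCast_iff _ _ _).1 hcast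
      unfold Nat.ModEq at h
      rw [h]
      exact Nat.mod_eq_of_lt (by omega)
    obtain ⟨l, hl⟩ : ∃ l, c0 * q = p * l + (p - 1) := by
      refine ⟨c0 * q / p, ?_⟩
      have := Nat.div_add_mod (c0 * q) p
      omega
    obtain ⟨a, ha⟩ := hqe
    have hXeven : (c0 * q) % 2 = 0 := by
      obtain ⟨w, hw⟩ : ∃ w, c0 * q = 2 * w := ⟨c0 * a, by rw [ha]; ring⟩
      omega
    have hleven : l % 2 = 0 := by
      have hY2 : (p * l) % 2 = (p % 2) * (l % 2) % 2 := Nat.mul_mod p l 2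
      rw [hpodd, one_mul] at hY2
      omega
    obtain ⟨t, ht⟩ : ∃ t, l = 2 * t := ⟨l / 2, by omega⟩
    have hc0lt : c0 < p := ZMod.val_lt _
    refine ⟨c0, by omega, ?_⟩
    have hX2 : c0 * q = 2*p*t + (p-1) := by
      rw [hl, ht]
      ring_nf
    rw [hX2, Nat.mul_add_mod, Nat.mod_eq_of_lt (by omega)]
  · -- q odd: invertible mod 2p
    haveI : NeZero (2*p) := ⟨by omega⟩
    have hcop2 : Nat.Coprime q (2*p) := Nat.Coprime.mul_right hqo.coprime_two_right hcop
    have hu : IsUnit (q : ZMod (2*p)) := (ZMod.isUnit_iff_coprime q (2*p)).2 hcop2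
    set c : ℕ := (((p - 1 : ℕ) : ZMod (2*p)) * (q : ZMod (2*p))⁻¹).val with hcdef
    have hcast : ((c * q : ℕ) : ZMod (2*p)) = ((p - 1 : ℕ) : ZMod (2*p)) := by
      push_cast
      rw [hcdef, ZMod.natCast_rightInverse _]
      rw [mul_assoc, ZMod.inv_mul_of_unit _ hu, mul_one]
    refine ⟨c, ZMod.val_lt _, ?_⟩
    have h := (ZMod.natCast_eq_natCast_iff _ _ _).1 hcast
    unfold Nat.ModEq at h
    rw [h]
    exact Nat.mod_eq_of_lt (by omega)


theorem beq_symm (x y : ℕ) : (x == y) = (y == x) := by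
  by_cases h : x = y
  · subst h; rfl
  · rw [beq_eq_false_iff_ne.2 h, beq_eq_false_iff_ne.2 (Ne.symm h)]

end CSaux

/-- the cyclic S-sequence `CS(r)` is symmetric: reversing it yields a
cyclic permutation (rotation) of itself. -/
theorem CSseq_symmetric (r : ℚ) (h0 : 0 < r) (h1 : r < 1) :
    (SseqQ r).reverse ~r SseqQ r := by
  set p := r.den with hpdef
  set q := r.num.toNat with hqdef
  have hnum : 0 < r.num := Rat.num_pos.2 h0
  have hq : 0 < q := by omega
  have hqp : q < p := by
    have := Rat.num_lt_denom_iff.2 h1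
    omega
  have hp : 0 < p := by omega
  have hcop : Nat.Coprime q p := by
    have hr := r.reduced
    have : r.num.natAbs = q := by omega
    rwa [this] at hr
  obtain ⟨c, hclt, hc⟩ := CSaux.exists_c p q hq hqp hcop
  have hp2 : 2 ≤ p := by omega
  -- basic facts about c
  have hc1 : 1 ≤ c := by
    rcases Nat.eq_zero_or_pos c with rfl | h
    · simp at hc; omega
    · exact h
  have hck : c + 1 < 2*p := by
    rcases Nat.lt_or_ge (c+1) (2*p) with h | h
    · exact h
    · exfalso
      have hceq : c = 2*p - 1 := by omega
      have e0 : (2*p-1)*q + 1*q = 2*p*q := by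
        rw [← Nat.add_mul]
        congr 1
        omega
      have e1 : 2*p*(q-1) + 2*p*1 = 2*p*q := by
        rw [← Nat.mul_add]
        congr 1
        omega
      have e2 : (2*p-1)*q = 2*p*(q-1) + (2*p - q) := by omega
      rw [hceq, e2, Nat.mul_add_mod, Nat.mod_eq_of_lt (by omega)] at hc
      omega
  -- the letter word
  set W : List ℕ := (List.range (2*p)).map (fun j => (j * q / p) % 2) with hWdef
  have hSW : SseqQ r = (W.splitBy (· == ·)).map List.length := rfl
  have hlen : W.length = 2*p := by simp [hWdef]
  have hWget : ∀ (i : ℕ) (h : i < W.length), W[i] = (i*q/p) % 2 := by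
    intro i h
    simp [hWdef]
  -- value lemmas
  have hsc : (c*q/p) % 2 = 0 := by
    have h := CSaux.key p q c hp hq hqp hc c (by omega)
    rw [show 2*p + c - c = 2*p from by omega, Nat.mod_self] at h
    simpa using h.symm
  have hsk : ((c+1)*q/p) % 2 = 1 := by
    have h := CSaux.key p q c hp hq hqp hc (c+1) (by omega)
    rw [show 2*p + c - (c+1) = 2*p - 1 from by omega,
      Nat.mod_eq_of_lt (show 2*p - 1 < 2*p from by omega)] at h
    have hlast : (2*p-1)*q/p = 2*q - 1 := by
      have a1 : (2*p-1)*q + 1*q = 2*p*q := by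
        rw [← Nat.add_mul]; congr 1; omega
      have a2 : p*(2*q-1) + p*1 = p*(2*q) := by
        rw [← Nat.mul_add]; congr 1; omega
      have a3 : p*(2*q) = 2*p*q := by ring
      have e1 : (2*p-1)*q = p*(2*q-1) + (p - q) := by omega
      rw [e1, Nat.mul_add_div hp, Nat.div_eq_of_lt (by omega), Nat.add_zero]
    rw [hlast, show (2*q-1) % 2 = 1 from by omega] at h
    exact h.symm
  have hslast : ((2*p-1)*q/p) % 2 = 1 := by
    have a1 : (2*p-1)*q + 1*q = 2*p*q := by
      rw [← Nat.add_mul]; congr 1; omega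
    have a2 : p*(2*q-1) + p*1 = p*(2*q) := by
      rw [← Nat.mul_add]; congr 1; omega
    have a3 : p*(2*q) = 2*p*q := by ring
    have e1 : (2*p-1)*q = p*(2*q-1) + (p - q) := by omega
    rw [e1, Nat.mul_add_div hp, Nat.div_eq_of_lt (by omega), Nat.add_zero]
    omega
  -- split into two pieces
  set W1 : List ℕ := W.take (c+1) with hW1def
  set W2 : List ℕ := W.drop (c+1) with hW2def
  have hl1 : W1.length = c+1 := by
    simp [hW1def, hlen]
    omega
  have hl2 : W2.length = 2*p - (c+1) := by simp [hW2def, hlen]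
  have hW1ne : W1 ≠ [] := by
    intro h
    rw [h] at hl1
    simp at hl1
  have hW2ne : W2 ≠ [] := by
    intro h
    rw [h] at hl2
    simp at hl2
    omega
  -- boundary values
  have hgl1 : W1.getLast hW1ne = 0 := by
    rw [List.getLast_eq_getElem, List.getElem_take]
    rw [hWget _ (by omega)]
    rw [show W1.length - 1 = c from by omega]
    exact hsc
  have hhd2 : W2.head hW2ne = 1 := by
    rw [List.head_eq_getElem, List.getElem_drop]
    rw [hWget _ (by omega)]
    rw [show c + 1 + 0 = c + 1 from by omega]
    exact hsk
  have hgl2 : W2.getLast hW2ne = 1 := by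
    rw [List.getLast_eq_getElem, List.getElem_drop]
    rw [hWget _ (by omega)]
    rw [show c + 1 + (W2.length - 1) = 2*p - 1 from by omega]
    exact hslast
  have hhd1 : W1.head hW1ne = 0 := by
    rw [List.head_eq_getElem, List.getElem_take]
    rw [hWget _ (by omega)]
    simp
  -- splitBy decompositions
  have hW12 : W1 ++ W2 = W := List.take_append_drop _ _
  have splitW : W.splitBy (· == ·) = W1.splitBy (· == ·) ++ W2.splitBy (· == ·) := by
    conv_lhs => rw [← hW12]
    exact CSaux.splitBy_append W1 W2 hW1ne hW2ne (by rw [hgl1, hhd2]; rfl)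
  have splitW' : (W2 ++ W1).splitBy (· == ·) = W2.splitBy (· == ·) ++ W1.splitBy (· == ·) :=
    CSaux.splitBy_append W2 W1 hW2ne hW1ne (by rw [hgl2, hhd1]; rfl)
  -- reversal = rotation at letter level
  have hrev : W.reverse = W.rotate (c+1) := by
    apply List.ext_getElem
    · simp
    · intro i h1 h2
      rw [List.getElem_reverse, List.getElem_rotate]
      rw [hWget _ (by omega), hWget _ (by
        have : W.length > 0 := by omega
        exact Nat.mod_lt _ (by omega))]
      simp only [hlen] at h1 h2 ⊢
      have hi : i < 2*p := by simpa [hlen] using h1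
      have h := CSaux.key p q c hp hq hqp hc (2*p-1-i) (by omega)
      rw [show 2*p + c - (2*p-1-i) = i + (c+1) from by omega] at h
      exact h.symm
  have hrot : W.rotate (c+1) = W2 ++ W1 := by
    rw [List.rotate_eq_drop_append_take (by omega)]
  -- runs
  have e : ((W.splitBy (· == ·)).map List.reverse).reverse.map List.length
      = ((W.splitBy (· == ·)).map List.length).reverse := by
    simp [List.map_reverse, List.map_map, Function.comp]
  have hfinal : (SseqQ r).reverse
      = (W2.splitBy (· == ·)).map List.length ++ (W1.splitBy (· == ·)).map List.length := by
    rw [hSW, ← e, ← CSaux.splitBy_reverse (R := (· == ·)) CSaux.beq_symm W,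
      hrev, hrot, splitW', List.map_append]
  have hS : SseqQ r
      = (W1.splitBy (· == ·)).map List.length ++ (W2.splitBy (· == ·)).map List.length := by
    rw [hSW, splitW, List.map_append]
  refine List.IsRotated.symm ⟨((W1.splitBy (· == ·)).map List.length).length, ?_⟩
  rw [hfinal]
  conv_lhs => rw [hS]
  rw [List.rotate_eq_drop_append_take (by simp), List.drop_left, List.take_left]
end

section
/- Let r = [m_1, m_2, ..., m_k] with 0 < r < 1 and define r̃ = [m_3,...,m_k] if m_2 = 1 (requiring k ≥ 3), and r̃ = [m_2 − 1, m_3, ..., m_k] if m_2 ≥ 2. Writing S(r) with terms in {m_1, m_1+1}, let T(r) = (t_1, ..., t_s) be the sequence counting the lengths of the blocks of (m_1+1)'s separated by single m_1's (when m_2 = 1), respectively the lengths of the blocks of m_1's separated by single (m_1+1)'s (when m_2 ≥ 2). Then T(r) = S(r̃) if m_2 = 1, and T(r) equals the reverse of S(r̃) if m_2 ≥ 2. -/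
/-- `(t₁⟨m+1⟩, m, t₂⟨m+1⟩, m, …, t_s⟨m+1⟩, m)`. -/
def blocksA (m : ℕ) (T : List ℕ) : List ℕ :=
  (T.map fun t => List.replicate t (m + 1) ++ [m]).flatten

/-- `(m+1, t₁⟨m⟩, m+1, t₂⟨m⟩, …, m+1, t_s⟨m⟩)`. -/
def blocksB (m : ℕ) (T : List ℕ) : List ℕ :=
  (T.map fun t => (m + 1) :: List.replicate t m).flatten


/-- ceiling division -/
def cdiv (a b : ℕ) : ℕ := (a + b - 1) / b

lemma cdiv_le_iff {b : ℕ} (hb : 0 < b) (a j : ℕ) : cdiv a b ≤ j ↔ a ≤ j * b := by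
  unfold cdiv
  rw [Nat.div_le_iff_le_mul_add_pred hb, Nat.mul_comm b j]
  omega

lemma lt_cdiv_iff {b : ℕ} (hb : 0 < b) (a j : ℕ) : j < cdiv a b ↔ j * b < a := by
  rw [← Nat.not_le, ← Nat.not_le, cdiv_le_iff hb]

lemma le_fdiv_iff {b : ℕ} (hb : 0 < b) (a j : ℕ) : j ≤ a / b ↔ j * b ≤ a := by
  rw [Nat.le_div_iff_mul_le hb]

lemma fdiv_lt_iff {b : ℕ} (hb : 0 < b) (a j : ℕ) : a / b < j ↔ a < j * b := by
  rw [← Nat.not_le, ← Nat.not_le, le_fdiv_iff hb]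

lemma cdiv_zero' {b : ℕ} (hb : 0 < b) : cdiv 0 b = 0 := by
  unfold cdiv
  rw [Nat.zero_add]
  exact Nat.div_eq_of_lt (by omega)

lemma cdiv_mono (b : ℕ) {a a' : ℕ} (h : a ≤ a') : cdiv a b ≤ cdiv a' b := by
  unfold cdiv; exact Nat.div_le_div_right (by omega)

/-- `⌈(M*d - m)/d⌉ = M - ⌊m/d⌋` -/
lemma cdiv_sub {d : ℕ} (hd : 0 < d) (M m : ℕ) (h : m ≤ M * d) :
    cdiv (M * d - m) d = M - m / d := by
  have hmod := Nat.div_add_mod m d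
  have hlt : m % d < d := Nat.mod_lt _ hd
  have e3 : d * (m / d) = (m / d) * d := Nat.mul_comm _ _
  have hMd : m / d ≤ M := by
    by_contra hc
    push_neg at hc
    have h4 : (M + 1) * d ≤ (m / d) * d := Nat.mul_le_mul_right d hc
    have e1 : (M + 1) * d = M * d + d := by ring
    omega
  have e2 : (M - m / d) * d = M * d - (m / d) * d := Nat.sub_mul _ _ _
  have e4 : (M - m / d) * d = d * (M - m / d) := Nat.mul_comm _ _
  have enum : M * d - m + d - 1 = d * (M - m / d) + (d - 1 - m % d) := by omega
  unfold cdiv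
  rw [enum, Nat.mul_add_div hd,
    Nat.div_eq_of_lt (show d - 1 - m % d < d by omega)]
  omega

/-- `⌈(a + l*d)/d⌉ = l + ⌈a/d⌉` -/
lemma cdiv_add_mul {d : ℕ} (hd : 0 < d) (a l : ℕ) :
    cdiv (a + l * d) d = l + cdiv a d := by
  unfold cdiv
  rw [show a + l * d + d - 1 = (a + d - 1) + l * d by omega,
    Nat.add_mul_div_right _ _ hd]
  omega

lemma fdiv_add_mul {d : ℕ} (hd : 0 < d) (a l : ℕ) :
    (a + l * d) / d = l + a / d := by
  rw [Nat.add_mul_div_right _ _ hd]; omega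

open List

def FRep (p : ℕ × ℕ) : List ℕ := List.replicate p.1 p.2

lemma splitBy_loop_consume (n : ℕ) (v : ℕ) :
    ∀ (l : List ℕ) (g : List ℕ) (gs : List (List ℕ)),
    List.splitBy.loop (· == ·) (List.replicate n v ++ l) v g gs
      = List.splitBy.loop (· == ·) l v (List.replicate n v ++ g) gs := by
  induction n with
  | zero => intro l g gs; simp
  | succ n ih =>
    intro l g gs
    rw [List.replicate_succ, List.cons_append]
    rw [List.splitBy.loop]
    simp only [beq_self_eq_true]
    rw [ih l (v :: g) gs]
    congr 1
    rw [List.append_cons, ← List.replicate_succ', List.replicate_succ, List.cons_append]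

lemma splitBy_loop_blocks :
    ∀ (vs : List (ℕ × ℕ)) (v : ℕ) (g : List ℕ) (gs : List (List ℕ)),
    (∀ p ∈ vs.head?, p.2 ≠ v) →
    (∀ p ∈ vs, 0 < p.1) →
    List.Chain' (fun a b : ℕ × ℕ => a.2 ≠ b.2) vs →
    List.splitBy.loop (· == ·) ((vs.map FRep).flatten) v g gs
      = ((v :: g).reverse :: gs).reverse ++ vs.map FRep := by
  intro vs
  induction vs with
  | nil => intro v g gs _ _ _; simp [List.splitBy.loop]
  | cons p vs ih =>
    intro v g gs hhd hpos hch
    obtain ⟨n, w⟩ := p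
    have hn : 0 < n := hpos _ (List.mem_cons_self)
    obtain ⟨n, rfl⟩ : ∃ m, n = m + 1 := ⟨n - 1, by omega⟩
    have hne : (v == w) = false := by
      have := hhd (n + 1, w) (by simp)
      simp only [ne_eq, beq_eq_false_iff_ne]
      simp at this
      omega
    change List.IsChain _ _ at hch
    rw [List.isChain_cons] at hch
    simp only [List.map_cons, List.flatten_cons]
    have hrep : FRep (n+1, w) = w :: List.replicate n w := by
      simp [FRep, List.replicate_succ]
    rw [hrep, List.cons_append, List.splitBy.loop, hne]
    change List.splitBy.loop (· == ·) (List.replicate n w ++ (vs.map FRep).flatten) w []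
      ((v :: g).reverse :: gs) = _
    rw [show ([] : List ℕ) = ([] ++ [] : List ℕ) from rfl, splitBy_loop_consume]
    rw [ih w (List.replicate n w ++ ([] ++ [])) ((v :: g).reverse :: gs)
      (fun p hp => (hch.1 p hp).symm) (fun p hp => hpos p (List.mem_cons_of_mem _ hp)) hch.2]
    have : (w :: (List.replicate n w ++ ([] ++ []))).reverse = FRep (n+1, w) := by
      simp [FRep, List.replicate_succ', List.replicate_succ]
    rw [this]
    simp [FRep, List.replicate_succ]

lemma splitBy_blocks (vs : List (ℕ × ℕ)) (hpos : ∀ p ∈ vs, 0 < p.1)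
    (hch : List.Chain' (fun a b : ℕ × ℕ => a.2 ≠ b.2) vs) :
    List.splitBy (· == ·) ((vs.map FRep).flatten) = vs.map FRep := by
  match vs with
  | [] => simp [List.splitBy]
  | (n, w) :: vs =>
    have hn : 0 < n := hpos _ (List.mem_cons_self)
    obtain ⟨n, rfl⟩ : ∃ m, n = m + 1 := ⟨n - 1, by omega⟩
    change List.IsChain _ _ at hch
    rw [List.isChain_cons] at hch
    simp only [List.map_cons, List.flatten_cons]
    rw [show FRep (n+1, w) = w :: List.replicate n w by simp [FRep, List.replicate_succ]]
    rw [List.cons_append, List.splitBy]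
    rw [show ([] : List ℕ) = ([] ++ [] : List ℕ) from rfl, splitBy_loop_consume]
    rw [splitBy_loop_blocks vs w (List.replicate n w ++ ([] ++ [])) []
      (fun p hp => (hch.1 p hp).symm) (fun p hp => hpos p (List.mem_cons_of_mem _ hp)) hch.2]
    have : (w :: (List.replicate n w ++ ([] ++ []))).reverse = FRep (n+1, w) := by
      simp [FRep, List.replicate_succ', List.replicate_succ]
    rw [this]
    simp [FRep, List.replicate_succ]

open List

lemma map_range_flatten {β : Type*} (F : ℕ → β) (h : ℕ → ℕ) (hm : Monotone h)
    (h0 : h 0 = 0) (s : ℕ) :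
    (List.range (h s)).map F
      = ((List.range s).map (fun l => (List.range' (h l) (h (l+1) - h l)).map F)).flatten := by
  induction s with
  | zero => simp [h0]
  | succ s ih =>
    rw [List.range_succ, List.map_append, List.flatten_append, ← ih]
    have hs : h (s+1) = h s + (h (s+1) - h s) := by
      have := hm (show s ≤ s + 1 by omega); omega
    rw [show (List.range (h (s+1))) = List.range (h s + (h (s+1) - h s)) by rw [← hs]]
    rw [List.range_add, List.map_append]
    simp [List.range'_eq_map_range]

lemma map_range'_const (f : ℕ → ℕ) (v : ℕ) : ∀ (a n : ℕ), (∀ i < n, f (a + i) = v) →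
    (List.range' a n).map f = List.replicate n v := by
  intro a n
  induction n generalizing a with
  | zero => intro _; simp
  | succ n ih =>
    intro hf
    rw [List.range'_succ, List.map_cons, List.replicate_succ]
    rw [show f a = v by simpa using hf 0 (by omega)]
    congr 1
    exact ih (a+1) (fun i hi => by rw [show a + 1 + i = a + (i+1) by omega]; exact hf (i+1) (by omega))

lemma map_range'_rep_append (f : ℕ → ℕ) (a n v w : ℕ)
    (h1 : ∀ i < n, f (a + i) = v) (h2 : f (a + n) = w) :
    (List.range' a (n+1)).map f = List.replicate n v ++ [w] := by
  have := List.range'_concat (step := 1) (s := a) (n := n)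
  rw [this, List.map_append, map_range'_const f v a n h1]
  simp only [Nat.one_mul, List.map_cons, List.map_nil]
  rw [h2]

lemma map_range'_cons_rep (f : ℕ → ℕ) (a n v w : ℕ)
    (h1 : f a = v) (h2 : ∀ i < n, f (a + 1 + i) = w) :
    (List.range' a (n+1)).map f = v :: List.replicate n w := by
  rw [List.range'_succ, List.map_cons, h1, map_range'_const f w (a+1) n h2]

lemma cdiv_succ_ge {a b : ℕ} (hb : 0 < b) (hba : b ≤ a) (k : ℕ) :
    cdiv (k * a) b + 1 ≤ cdiv ((k + 1) * a) b := by
  have h1 : k * a + 1 * b ≤ (k + 1) * a := by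
    have : (k + 1) * a = k * a + a := by ring
    omega
  calc cdiv (k * a) b + 1 = cdiv (k * a + 1 * b) b := by rw [cdiv_add_mul hb]; omega
  _ ≤ cdiv ((k + 1) * a) b := cdiv_mono b h1

lemma signRuns_eq (p q : ℕ) (hq : 0 < q) (hpq : q ≤ p) :
    signRuns p q
      = (List.range (2 * q)).map (fun k => cdiv ((k + 1) * p) q - cdiv (k * p) q) := by
  have hp : 0 < p := lt_of_lt_of_le hq hpq
  set c : ℕ → ℕ := fun k => cdiv (k * p) q with hc
  have hmono : Monotone c := fun a b hab =>
    cdiv_mono q (Nat.mul_le_mul_right p hab)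
  have hc0 : c 0 = 0 := by simp only [hc, Nat.zero_mul]; exact cdiv_zero' hq
  have hc2q : c (2 * q) = 2 * p := by
    show cdiv (2 * q * p) q = 2 * p
    rw [show 2 * q * p = 0 + (2 * p) * q by ring, cdiv_add_mul hq, cdiv_zero' hq]
    omega
  have hval : ∀ k j, c k ≤ j → j < c (k + 1) → j * q / p = k := by
    intro k j h1 h2
    have hk1 : k * p ≤ j * q := (cdiv_le_iff hq _ _).1 h1
    have hk2 : j * q < (k + 1) * p := (lt_cdiv_iff hq _ _).1 h2
    have g1 : k ≤ j * q / p := (le_fdiv_iff hp _ _).2 hk1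
    have g2 : j * q / p < k + 1 := (fdiv_lt_iff hp _ _).2 hk2
    omega
  have hpos : ∀ k, c k + 1 ≤ c (k + 1) := fun k => cdiv_succ_ge hq hpq k
  have key : (List.range (2 * p)).map (fun j => (j * q / p) % 2)
      = (((List.range (2 * q)).map (fun k => (c (k + 1) - c k, k % 2))).map FRep).flatten := by
    rw [show (2 * p) = c (2 * q) from hc2q.symm,
      map_range_flatten (fun j => (j * q / p) % 2) c hmono hc0 (2 * q), List.map_map]
    congr 1
    apply List.map_congr_left
    intro k _
    show (List.range' (c k) (c (k + 1) - c k)).map (fun j => j * q / p % 2)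
      = FRep (c (k + 1) - c k, k % 2)
    apply map_range'_const
    intro i hi
    have := hval k (c k + i) (by omega) (by omega)
    rw [this]
  unfold signRuns
  rw [key, splitBy_blocks _ ?pos ?chain]
  · rw [List.map_map, List.map_map]
    apply List.map_congr_left
    intro k _
    simp [FRep]
    rfl
  case pos =>
    intro pr hpr
    simp only [List.mem_map, List.mem_range] at hpr
    obtain ⟨k, hk, rfl⟩ := hpr
    have := hpos k
    simp only []
    omega
  case chain =>
    change List.IsChain _ _
    rw [List.isChain_map]
    rw [show 2 * q = (2 * q - 1) + 1 by omega]
    rw [List.isChain_range_succ]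
    intro m hm
    simp only []
    omega

section BlockA

variable (m1 pt qt : ℕ)

lemma blockA_main (hm1 : 0 < m1) (hqt : 0 < qt) (hle : qt ≤ pt) :
    (List.range (2 * (pt + qt))).map
        (fun k => cdiv ((k + 1) * (m1 * (pt + qt) + pt)) (pt + qt)
          - cdiv (k * (m1 * (pt + qt) + pt)) (pt + qt))
      = blocksA m1 ((List.range (2 * qt)).map
          (fun l => cdiv ((l + 1) * pt) qt - cdiv (l * pt) qt)) := by
  set q := pt + qt with hqdef
  set p := m1 * q + pt with hpdef
  have hq : 0 < q := by omega
  set t : ℕ → ℕ := fun k => cdiv ((k + 1) * p) q - cdiv (k * p) q with ht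
  set tt : ℕ → ℕ := fun l => cdiv ((l + 1) * pt) qt - cdiv (l * pt) qt with htt
  set h : ℕ → ℕ := fun l => cdiv (l * q) qt with hh
  set u : ℕ → ℕ := fun k => k * qt / q with hu
  -- basic facts
  have F1 : ∀ k, cdiv (k * p) q = k * m1 + cdiv (k * pt) q := by
    intro k
    rw [show k * p = k * pt + (k * m1) * q by rw [hpdef]; ring, cdiv_add_mul hq]
  have F2 : ∀ k, cdiv (k * pt) q = k - u k := by
    intro k
    have : k * pt = k * q - k * qt := by rw [hqdef]; rw [Nat.mul_add]; omega
    rw [this, cdiv_sub hq k (k * qt) (by rw [hqdef, Nat.mul_add]; omega)]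
  have Fu : ∀ k, u k ≤ k := by
    intro k
    rw [hu]
    simp only []
    calc k * qt / q ≤ k * q / q := Nat.div_le_div_right (Nat.mul_le_mul_left k (by omega))
    _ = k := Nat.mul_div_cancel k hq
  have Fustep : ∀ k, u (k + 1) ≤ u k + 1 := by
    intro k
    show (k + 1) * qt / q ≤ k * qt / q + 1
    calc (k + 1) * qt / q ≤ (k * qt + 1 * q) / q := by
          apply Nat.div_le_div_right; rw [show (k+1)*qt = k*qt + qt by ring]; omega
    _ = 1 + k * qt / q := fdiv_add_mul hq _ 1
    _ = k * qt / q + 1 := by omega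
  have Fumono : ∀ k, u k ≤ u (k + 1) := by
    intro k
    apply Nat.div_le_div_right
    rw [show (k+1)*qt = k*qt + qt by ring]; omega
  -- floor char
  have F3 : ∀ l k, l ≤ u k ↔ h l ≤ k := by
    intro l k
    rw [hu, hh]
    simp only []
    rw [le_fdiv_iff hq, cdiv_le_iff hqt]
  -- h facts
  have hmono : Monotone h := fun a b hab => cdiv_mono qt (Nat.mul_le_mul_right q hab)
  have h0 : h 0 = 0 := by simp only [hh, Nat.zero_mul]; exact cdiv_zero' hqt
  have htop : h (2 * qt) = 2 * q := by
    show cdiv (2 * qt * q) qt = 2 * q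
    rw [show 2 * qt * q = 0 + (2 * q) * qt by ring, cdiv_add_mul hqt, cdiv_zero' hqt]
    omega
  have F5 : ∀ l, h (l + 1) - h l = tt l + 1 := by
    intro l
    have e1 : h l = l + cdiv (l * pt) qt := by
      show cdiv (l * q) qt = _
      rw [show l * q = l * pt + l * qt by rw [hqdef]; ring, cdiv_add_mul hqt]
    have e2 : h (l + 1) = (l + 1) + cdiv ((l + 1) * pt) qt := by
      show cdiv ((l + 1) * q) qt = _
      rw [show (l+1) * q = (l+1) * pt + (l+1) * qt by rw [hqdef]; ring, cdiv_add_mul hqt]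
    have e3 : cdiv (l * pt) qt ≤ cdiv ((l + 1) * pt) qt :=
      cdiv_mono qt (Nat.mul_le_mul_right pt (by omega))
    rw [e1, e2, htt]
    simp only []
    omega
  -- value of t on block l
  have tval : ∀ l k, h l ≤ k → k + 1 ≤ h (l + 1) →
      (k + 1 < h (l + 1) → t k = m1 + 1) ∧ (k + 1 = h (l + 1) → t k = m1) := by
    intro l k hk1 hk2
    have hukl : u k = l := by
      have a1 : l ≤ u k := (F3 l k).2 hk1
      have a2 : ¬ (l + 1 ≤ u k) := fun hcon => by
        have := (F3 (l + 1) k).1 hcon; omega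
      omega
    have em : (k + 1) * m1 = k * m1 + m1 := by ring
    have e1 : cdiv (k * p) q = k * m1 + (k - u k) := by rw [F1, F2]
    have e2 : cdiv ((k + 1) * p) q = (k + 1) * m1 + (k + 1 - u (k + 1)) := by rw [F1, F2]
    have huk := Fu k
    have huk1 := Fu (k + 1)
    have hst := Fustep k
    have hmn := Fumono k
    constructor
    · intro hlt
      have : ¬ (l + 1 ≤ u (k + 1)) := fun hcon => by
        have := (F3 (l + 1) (k + 1)).1 hcon; omega
      have hukl1 : u (k + 1) = l := by omega
      rw [ht]; simp only []
      omega
    · intro heq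
      have : l + 1 ≤ u (k + 1) := by
        rw [F3]; omega
      have hukl1 : u (k + 1) = l + 1 := by omega
      rw [ht]; simp only []
      omega
  -- assemble
  rw [show (2 * q) = h (2 * qt) from htop.symm]
  rw [map_range_flatten t h hmono h0 (2 * qt)]
  unfold blocksA
  rw [List.map_map]
  congr 1
  apply List.map_congr_left
  intro l _
  have hm' : h l ≤ h (l + 1) := hmono (by omega)
  have hF5 := F5 l
  show List.map t (List.range' (h l) (h (l + 1) - h l)) = List.replicate (tt l) (m1 + 1) ++ [m1]
  rw [hF5]
  apply map_range'_rep_append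
  · intro i hi
    exact (tval l (h l + i) (by omega) (by omega)).1 (by omega)
  · exact (tval l (h l + tt l) (by omega) (by omega)).2 (by omega)

end BlockA

section BlockB

variable (m1 pt qt : ℕ)

lemma blockB_main (hm1 : 0 < m1) (hqt : 0 < qt) (hle : qt ≤ pt) :
    (List.range (2 * (pt + qt))).map
        (fun k => cdiv ((k + 1) * (m1 * (pt + qt) + qt)) (pt + qt)
          - cdiv (k * (m1 * (pt + qt) + qt)) (pt + qt))
      = blocksB m1 ((List.range (2 * qt)).map
          (fun l => (l + 1) * (pt + qt) / qt - l * (pt + qt) / qt - 1))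
    ∧ (List.range (2 * qt)).map (fun l => (l + 1) * (pt + qt) / qt - l * (pt + qt) / qt - 1)
      = ((List.range (2 * qt)).map
          (fun l => cdiv ((l + 1) * pt) qt - cdiv (l * pt) qt)).reverse := by
  set q := pt + qt with hqdef
  set p := m1 * q + qt with hpdef
  have hq : 0 < q := by omega
  set t : ℕ → ℕ := fun k => cdiv ((k + 1) * p) q - cdiv (k * p) q with ht
  set tt : ℕ → ℕ := fun l => cdiv ((l + 1) * pt) qt - cdiv (l * pt) qt with htt
  set g : ℕ → ℕ := fun l => l * q / qt with hg
  set e : ℕ → ℕ := fun k => cdiv (k * qt) q with he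
  have F1 : ∀ k, cdiv (k * p) q = k * m1 + cdiv (k * qt) q := by
    intro k
    rw [show k * p = k * qt + (k * m1) * q by rw [hpdef]; ring, cdiv_add_mul hq]
  -- char: l + 1 ≤ e k ↔ g l + 1 ≤ k
  have F3 : ∀ l k, l + 1 ≤ e k ↔ g l + 1 ≤ k := by
    intro l k
    rw [he, hg]
    simp only []
    rw [show (l + 1 ≤ cdiv (k * qt) q) ↔ (l < cdiv (k * qt) q) from Iff.rfl,
      lt_cdiv_iff hq]
    rw [show (l * q / qt + 1 ≤ k) ↔ (l * q / qt < k) from Iff.rfl, fdiv_lt_iff hqt]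
  -- g facts
  have gmono : Monotone g := fun a b hab => Nat.div_le_div_right (Nat.mul_le_mul_right q hab)
  have g0 : g 0 = 0 := by simp [hg]
  have gtop : g (2 * qt) = 2 * q := by
    show 2 * qt * q / qt = 2 * q
    rw [show 2 * qt * q = 0 + (2 * q) * qt by ring, fdiv_add_mul hqt]
    simp
  have gstep : ∀ l, g l + 2 ≤ g (l + 1) := by
    intro l
    have h1 : l * q + 2 * qt ≤ (l + 1) * q := by
      have : (l + 1) * q = l * q + q := by ring
      omega
    have : (l * q + 2 * qt) / qt = 2 + l * q / qt := fdiv_add_mul hqt _ 2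
    have h2 : (l * q + 2 * qt) / qt ≤ (l + 1) * q / qt := Nat.div_le_div_right h1
    show l * q / qt + 2 ≤ (l + 1) * q / qt
    omega
  -- e facts
  have Festep : ∀ k, e (k + 1) ≤ e k + 1 := by
    intro k
    show cdiv ((k + 1) * qt) q ≤ cdiv (k * qt) q + 1
    have : cdiv (k * qt + 1 * q) q = 1 + cdiv (k * qt) q := cdiv_add_mul hq _ 1
    have h2 : cdiv ((k + 1) * qt) q ≤ cdiv (k * qt + 1 * q) q := by
      apply cdiv_mono
      have : (k + 1) * qt = k * qt + qt := by ring
      omega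
    omega
  have Femono : ∀ k, e k ≤ e (k + 1) := by
    intro k
    apply cdiv_mono
    have : (k + 1) * qt = k * qt + qt := by ring
    omega
  -- e value on blocks: for l, g l ≤ k < g (l+1) etc.
  have eval1 : ∀ l, e (g l) = l := by
    intro l
    have a1 : ¬ (l + 1 ≤ e (g l)) := fun hcon => by
      have := (F3 l (g l)).1 hcon; omega
    rcases Nat.eq_zero_or_pos l with rfl | hl
    · omega
    · have : (l - 1) + 1 ≤ e (g l) := by
        rw [F3]
        have := gstep (l - 1)
        have : g (l - 1 + 1) = g l := by congr 1; omega
        omega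
      omega
  have tval : ∀ l k, g l ≤ k → k + 1 ≤ g (l + 1) →
      (k = g l → t k = m1 + 1) ∧ (g l < k → t k = m1) := by
    intro l k hk1 hk2
    have em : (k + 1) * m1 = k * m1 + m1 := by ring
    have e1 : cdiv (k * p) q = k * m1 + e k := F1 k
    have e2 : cdiv ((k + 1) * p) q = (k + 1) * m1 + e (k + 1) := F1 (k + 1)
    have hstep := Festep k
    have hmn := Femono k
    constructor
    · intro hkgl
      have hek : e k = l := by rw [hkgl]; exact eval1 l
      have hek1 : l + 1 ≤ e (k + 1) := by rw [F3]; omega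
      rw [ht]; simp only []
      omega
    · intro hgt
      have hek : e k = l + 1 := by
        have ha : l + 1 ≤ e k := by rw [F3]; omega
        have hb : ¬ (l + 2 ≤ e k) := fun hcon => by
          have := (F3 (l + 1) k).1 hcon; omega
        omega
      have hek1 : e (k + 1) = l + 1 := by
        have ha : l + 1 ≤ e (k + 1) := by rw [F3]; omega
        have hb : ¬ (l + 2 ≤ e (k + 1)) := fun hcon => by
          have := (F3 (l + 1) (k + 1)).1 hcon; omega
        omega
      rw [ht]; simp only []
      omega
  constructor
  · -- main decomposition
    rw [show (2 * q) = g (2 * qt) from gtop.symm]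
    rw [map_range_flatten t g gmono g0 (2 * qt)]
    unfold blocksB
    rw [List.map_map]
    congr 1
    apply List.map_congr_left
    intro l _
    have hm' := gstep l
    show List.map t (List.range' (g l) (g (l + 1) - g l))
      = (m1 + 1) :: List.replicate ((l + 1) * q / qt - l * q / qt - 1) m1
    have hlen : g (l + 1) - g l = ((l + 1) * q / qt - l * q / qt - 1) + 1 := by
      show g (l + 1) - g l = (g (l + 1) - g l - 1) + 1
      omega
    rw [hlen]
    apply map_range'_cons_rep
    · exact (tval l (g l) (by omega) (by omega)).1 rfl
    · intro i hi
      exact (tval l (g l + 1 + i) (by omega) (by omega)).2 (by omega)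
  · -- reversal
    rw [← List.map_reverse]
    rw [List.range_eq_range', List.reverse_range']
    rw [List.map_map, ← List.range_eq_range']
    apply List.map_congr_left
    intro l hl
    rw [List.mem_range] at hl
    show (l + 1) * q / qt - l * q / qt - 1 = tt (0 + 2 * qt - 1 - l)
    have hgl : g l = l + l * pt / qt := by
      show l * q / qt = _
      rw [show l * q = l * pt + l * qt by rw [hqdef]; ring, fdiv_add_mul hqt]
    have hgl1 : g (l + 1) = (l + 1) + (l + 1) * pt / qt := by
      show (l + 1) * q / qt = _
      rw [show (l + 1) * q = (l + 1) * pt + (l + 1) * qt by rw [hqdef]; ring, fdiv_add_mul hqt]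
    have hidx : 0 + 2 * qt - 1 - l = 2 * qt - 1 - l := by omega
    rw [hidx, htt]
    simp only []
    have hi1 : 2 * qt - 1 - l + 1 = 2 * qt - l := by omega
    rw [hi1]
    have ha : cdiv ((2 * qt - l) * pt) qt = 2 * pt - l * pt / qt := by
      rw [show (2 * qt - l) * pt = 2 * pt * qt - l * pt by
        rw [Nat.sub_mul]; congr 1; ring]
      exact cdiv_sub hqt (2 * pt) (l * pt)
        (by rw [show 2 * pt * qt = 2 * qt * pt by ring]; exact Nat.mul_le_mul_right pt (by omega))
    have hb : cdiv ((2 * qt - 1 - l) * pt) qt = 2 * pt - (l + 1) * pt / qt := by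
      rw [show (2 * qt - 1 - l) * pt = 2 * pt * qt - (l + 1) * pt by
        rw [show 2 * qt - 1 - l = 2 * qt - (l + 1) by omega, Nat.sub_mul,
          show 2 * qt * pt = 2 * pt * qt by ring]]
      exact cdiv_sub hqt (2 * pt) ((l + 1) * pt)
        (by rw [show 2 * pt * qt = 2 * qt * pt by ring]; exact Nat.mul_le_mul_right pt (by omega))
    rw [ha, hb]
    -- arithmetic cleanup
    have m1le : l * pt / qt ≤ (l + 1) * pt / qt :=
      Nat.div_le_div_right (Nat.mul_le_mul_right pt (by omega))
    have m2le : (l + 1) * pt / qt ≤ 2 * pt := by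
      rw [Nat.div_le_iff_le_mul_add_pred hqt]
      calc (l + 1) * pt ≤ 2 * qt * pt := Nat.mul_le_mul_right pt (by omega)
      _ ≤ qt * (2 * pt) + (qt - 1) := by rw [show qt * (2 * pt) = 2 * qt * pt by ring]; omega
    show g (l + 1) - g l - 1 = _
    rw [hgl, hgl1]
    omega

end BlockB


/-- `(numerator, denominator)` of a continued fraction. -/
def nd : List ℕ → ℕ × ℕ
  | [] => (0, 1)
  | m :: l => ((nd l).2, m * (nd l).2 + (nd l).1)

lemma nd_den_pos (l : List ℕ) (hl : ∀ x ∈ l, 0 < x) : 0 < (nd l).2 := by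
  induction l with
  | nil => simp [nd]
  | cons m l ih =>
    have hm : 0 < m := hl m (List.mem_cons_self)
    have := ih (fun x hx => hl x (List.mem_cons_of_mem _ hx))
    simp only [nd]
    nlinarith

lemma nd_num_le_den (l : List ℕ) (hl : ∀ x ∈ l, 0 < x) : (nd l).1 ≤ (nd l).2 := by
  induction l with
  | nil => simp [nd]
  | cons m l ih =>
    have hm : 0 < m := hl m (List.mem_cons_self)
    have h2 := nd_den_pos l (fun x hx => hl x (List.mem_cons_of_mem _ hx))
    simp only [nd]
    nlinarith

lemma nd_num_pos (m : ℕ) (l : List ℕ) (hl : ∀ x ∈ (m :: l), 0 < x) :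
    0 < (nd (m :: l)).1 := by
  simp only [nd]
  exact nd_den_pos l (fun x hx => hl x (List.mem_cons_of_mem _ hx))

lemma nd_coprime (l : List ℕ) : Nat.Coprime (nd l).1 (nd l).2 := by
  induction l with
  | nil => simp [nd, Nat.Coprime]
  | cons m l ih =>
    simp only [nd]
    have : Nat.Coprime (nd l).2 (nd l).1 := Nat.Coprime.symm ih
    simpa [Nat.Coprime, Nat.add_comm, Nat.gcd_add_mul_right_right] using this

lemma contFrac_eq_nd (l : List ℕ) (hl : ∀ x ∈ l, 0 < x) :
    contFrac l = ((nd l).1 : ℚ) / ((nd l).2 : ℚ) := by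
  induction l with
  | nil => simp [contFrac, nd]
  | cons m l ih =>
    have hm : 0 < m := hl m (List.mem_cons_self)
    have hl' : ∀ x ∈ l, 0 < x := fun x hx => hl x (List.mem_cons_of_mem m hx)
    have hden := nd_den_pos l hl'
    simp only [contFrac, nd, ih hl']
    have hden' : (0:ℚ) < ((nd l).2 : ℚ) := by exact_mod_cast hden
    have hm' : (0:ℚ) < (m:ℚ) := by exact_mod_cast hm
    have hnn : (0:ℚ) ≤ ((nd l).1 : ℚ)/((nd l).2 : ℚ) := by positivity
    have h0 : (0:ℚ) < (m:ℚ) + ((nd l).1 : ℚ)/((nd l).2 : ℚ) :=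
      add_pos_of_pos_of_nonneg hm' hnn
    rw [div_eq_div_iff h0.ne' (by push_cast; nlinarith)]
    field_simp
    push_cast; ring

lemma contFrac_num (l : List ℕ) (hl : ∀ x ∈ l, 0 < x) :
    (contFrac l).num = ((nd l).1 : ℤ) := by
  rw [contFrac_eq_nd l hl]
  have hden : 0 < (nd l).2 := nd_den_pos l hl
  have : ((nd l).1 : ℚ) / ((nd l).2 : ℚ) = ((nd l).1 : ℤ) / ((nd l).2 : ℤ) := by push_cast; ring
  rw [this]
  exact Rat.num_div_eq_of_coprime (by exact_mod_cast hden) (by simpa using nd_coprime l)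

lemma contFrac_den (l : List ℕ) (hl : ∀ x ∈ l, 0 < x) :
    (contFrac l).den = (nd l).2 := by
  rw [contFrac_eq_nd l hl]
  have hden : 0 < (nd l).2 := nd_den_pos l hl
  have : ((nd l).1 : ℚ) / ((nd l).2 : ℚ) = ((nd l).1 : ℤ) / ((nd l).2 : ℤ) := by push_cast; ring
  rw [this]
  have := Rat.den_div_eq_of_coprime (a := ((nd l).1 : ℤ)) (b := ((nd l).2 : ℤ))
    (by exact_mod_cast hden) (by simpa using nd_coprime l)
  exact_mod_cast this

lemma gpos {q qt : ℕ} (hqt : 0 < qt) (h2q : 2 * qt ≤ q) (l : ℕ) :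
    l * q / qt + 2 ≤ (l + 1) * q / qt := by
  have h1 : l * q + 2 * qt ≤ (l + 1) * q := by
    have : (l + 1) * q = l * q + q := by ring
    omega
  have h3 : (l * q + 2 * qt) / qt = 2 + l * q / qt := fdiv_add_mul hqt _ 2
  have h2 : (l * q + 2 * qt) / qt ≤ (l + 1) * q / qt := Nat.div_le_div_right h1
  omega

/-- the T-sequence of `r = [m₁, m₂, …]` equals `S(r̃)` when `m₂ = 1`,
and the reverse of `S(r̃)` when `m₂ ≥ 2`, where `r̃ = [m₃,…]` resp. `[m₂−1, m₃, …]`. -/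
theorem Tseq_eq_Sseq (m1 m2 : ℕ) (rest : List ℕ) (h1 : 0 < m1) (h2 : 0 < m2)
    (hpos : ∀ x ∈ rest, 0 < x)
    (hlast : ∀ x ∈ (m1 :: m2 :: rest).getLast?, 2 ≤ x)
    (r rt : ℚ) (hr : r = contFrac (m1 :: m2 :: rest))
    (hrt : rt = contFrac (if m2 = 1 then rest else (m2 - 1) :: rest)) :
    ∃ T : List ℕ, (∀ t ∈ T, 0 < t) ∧
      (if m2 = 1 then SseqQ r = blocksA m1 T ∧ T = SseqQ rt
       else SseqQ r = blocksB m1 T ∧ T = (SseqQ rt).reverse) := by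
  have hposA : ∀ x ∈ (m1 :: m2 :: rest), 0 < x := by
    intro x hx
    simp only [List.mem_cons] at hx
    rcases hx with rfl | rfl | hx
    · exact h1
    · exact h2
    · exact hpos x hx
  by_cases hm2 : m2 = 1
  · -- ============ CASE A ============
    subst hm2
    simp only [reduceIte] at hrt ⊢
    -- rest is nonempty
    obtain ⟨y, ys, rfl⟩ : ∃ y ys, rest = y :: ys := by
      cases rest with
      | nil =>
        exfalso
        have := hlast 1 (by simp)
        omega
      | cons y ys => exact ⟨y, ys, rfl⟩
    set qt := (nd (y :: ys)).1 with hqtdef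
    set pt := (nd (y :: ys)).2 with hptdef
    have hqt : 0 < qt := nd_num_pos y ys hpos
    have hptpos : 0 < pt := nd_den_pos _ hpos
    have hle : qt ≤ pt := nd_num_le_den _ hpos
    -- numerator/denominator of r
    have e2 : (nd (1 :: y :: ys)).2 = pt + qt := by
      show 1 * pt + qt = pt + qt
      omega
    have e1 : (nd (1 :: y :: ys)).1 = pt := rfl
    have eden : (nd (m1 :: 1 :: y :: ys)).2 = m1 * (pt + qt) + pt := by
      show m1 * (nd (1 :: y :: ys)).2 + (nd (1 :: y :: ys)).1 = _
      rw [e2, e1]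
    have enum : (nd (m1 :: 1 :: y :: ys)).1 = pt + qt := by
      show (nd (1 :: y :: ys)).2 = _
      rw [e2]
    have hrden : r.den = m1 * (pt + qt) + pt := by
      rw [hr, contFrac_den _ hposA, eden]
    have hrnum : r.num.toNat = pt + qt := by
      rw [hr, contFrac_num _ hposA, enum]
      omega
    have hrtden : rt.den = pt := by rw [hrt, contFrac_den _ hpos]
    have hrtnum : rt.num.toNat = qt := by
      rw [hrt, contFrac_num _ hpos]
      omega
    have hqle : pt + qt ≤ m1 * (pt + qt) + pt := by
      have : 1 * (pt + qt) ≤ m1 * (pt + qt) := Nat.mul_le_mul_right _ h1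
      omega
    have hSr : SseqQ r = (List.range (2 * (pt + qt))).map
        (fun k => cdiv ((k + 1) * (m1 * (pt + qt) + pt)) (pt + qt)
          - cdiv (k * (m1 * (pt + qt) + pt)) (pt + qt)) := by
      unfold SseqQ
      rw [hrden, hrnum]
      exact signRuns_eq _ _ (by omega) hqle
    have hSrt : SseqQ rt = (List.range (2 * qt)).map
        (fun l => cdiv ((l + 1) * pt) qt - cdiv (l * pt) qt) := by
      unfold SseqQ
      rw [hrtden, hrtnum]
      exact signRuns_eq _ _ hqt hle
    refine ⟨(List.range (2 * qt)).map
      (fun l => cdiv ((l + 1) * pt) qt - cdiv (l * pt) qt), ?_, ?_, ?_⟩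
    · intro t ht
      simp only [List.mem_map, List.mem_range] at ht
      obtain ⟨l, hl, rfl⟩ := ht
      have := cdiv_succ_ge hqt hle l
      omega
    · rw [hSr]
      exact blockA_main m1 pt qt h1 hqt hle
    · rw [hSrt]
  · -- ============ CASE B ============
    simp only [if_neg hm2] at hrt ⊢
    have hm2' : 2 ≤ m2 := by omega
    have hposB : ∀ x ∈ ((m2 - 1) :: rest), 0 < x := by
      intro x hx
      simp only [List.mem_cons] at hx
      rcases hx with rfl | hx
      · omega
      · exact hpos x hx
    set qt := (nd ((m2 - 1) :: rest)).1 with hqtdef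
    set pt := (nd ((m2 - 1) :: rest)).2 with hptdef
    have hqt : 0 < qt := by
      have : (nd ((m2 - 1) :: rest)).1 = (nd rest).2 := rfl
      rw [hqtdef, this]
      exact nd_den_pos _ hpos
    have hle : qt ≤ pt := nd_num_le_den _ hposB
    -- relations
    have eB1 : (nd (m2 :: rest)).1 = qt := rfl
    have eB2 : (nd (m2 :: rest)).2 = pt + qt := by
      show m2 * (nd rest).2 + (nd rest).1 = pt + qt
      have hpt : pt = (m2 - 1) * (nd rest).2 + (nd rest).1 := rfl
      have hqt' : qt = (nd rest).2 := rfl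
      have : m2 * (nd rest).2 = (m2 - 1) * (nd rest).2 + (nd rest).2 := by
        obtain ⟨a, rfl⟩ : ∃ a, m2 = a + 1 := ⟨m2 - 1, by omega⟩
        simp [Nat.succ_mul]
      omega
    have eden : (nd (m1 :: m2 :: rest)).2 = m1 * (pt + qt) + qt := by
      show m1 * (nd (m2 :: rest)).2 + (nd (m2 :: rest)).1 = _
      rw [eB2, eB1]
    have enum : (nd (m1 :: m2 :: rest)).1 = pt + qt := by
      show (nd (m2 :: rest)).2 = _
      rw [eB2]
    have hrden : r.den = m1 * (pt + qt) + qt := by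
      rw [hr, contFrac_den _ hposA, eden]
    have hrnum : r.num.toNat = pt + qt := by
      rw [hr, contFrac_num _ hposA, enum]
      omega
    have hrtden : rt.den = pt := by rw [hrt, contFrac_den _ hposB]
    have hrtnum : rt.num.toNat = qt := by
      rw [hrt, contFrac_num _ hposB]
      omega
    have hqle : pt + qt ≤ m1 * (pt + qt) + qt := by
      have : 1 * (pt + qt) ≤ m1 * (pt + qt) := Nat.mul_le_mul_right _ h1
      omega
    have hSr : SseqQ r = (List.range (2 * (pt + qt))).map
        (fun k => cdiv ((k + 1) * (m1 * (pt + qt) + qt)) (pt + qt)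
          - cdiv (k * (m1 * (pt + qt) + qt)) (pt + qt)) := by
      unfold SseqQ
      rw [hrden, hrnum]
      exact signRuns_eq _ _ (by omega) hqle
    have hSrt : SseqQ rt = (List.range (2 * qt)).map
        (fun l => cdiv ((l + 1) * pt) qt - cdiv (l * pt) qt) := by
      unfold SseqQ
      rw [hrtden, hrtnum]
      exact signRuns_eq _ _ hqt hle
    obtain ⟨hB1, hB2⟩ := blockB_main m1 pt qt h1 hqt hle
    refine ⟨(List.range (2 * qt)).map
      (fun l => (l + 1) * (pt + qt) / qt - l * (pt + qt) / qt - 1), ?_, ?_, ?_⟩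
    · intro t ht
      simp only [List.mem_map, List.mem_range] at ht
      obtain ⟨l, hl, rfl⟩ := ht
      have := gpos (q := pt + qt) hqt (by omega) l
      omega
    · rw [hSr]
      exact hB1
    · rw [hSrt]
      exact hB2
end

section
/- Let r = [m_1,...,m_k] with 0 < r < 1 and k ≥ 2. Define I_1(r) = [0, r_1] and I_2(r) = [r_2, 1], where r_1 = [m_1,...,m_{k-1}] and r_2 = [m_1,...,m_{k-1}, m_k − 1] when k is odd, and r_1 = [m_1,...,m_{k-1}, m_k − 1] and r_2 = [m_1,...,m_{k-1}] when k is even. If s = [n_1,...,n_t] is a rational number with 0 < s ≤ 1 satisfying: t ≥ k, n_i = m_i for i = 1,...,k−1, and (n_k ≥ m_k or (n_k = m_k − 1 and t > k)), then s ∉ I_1(r) ∪ I_2(r). -/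
def cfA : List ℕ → ℚ → ℚ
  | [], x => x
  | m :: l, x => 1 / (m + cfA l x)

lemma cfA_zero (M : List ℕ) : cfA M 0 = contFrac M := by
  induction M with
  | nil => rfl
  | cons m l ih => simp [cfA, contFrac, ih]

lemma cfA_append (M L : List ℕ) : contFrac (M ++ L) = cfA M (contFrac L) := by
  induction M with
  | nil => rfl
  | cons m l ih => simp [cfA, contFrac, ih]

lemma cfA_nonneg (M : List ℕ) (h : ∀ m ∈ M, 0 < m) {x : ℚ} (hx : 0 ≤ x) : 0 ≤ cfA M x := by
  induction M with
  | nil => exact hx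
  | cons m l ih =>
    have hm : (1:ℚ) ≤ m := by exact_mod_cast h m (by simp)
    have h0 : 0 ≤ cfA l x := ih (fun a ha => h a (by simp [ha]))
    have : 0 < (m:ℚ) + cfA l x := by linarith
    simp only [cfA]
    positivity

lemma cfA_lt (M : List ℕ) (h : ∀ m ∈ M, 0 < m) {x y : ℚ} (hx : 0 ≤ x) (hxy : x < y) :
    (M.length % 2 = 0 → cfA M x < cfA M y) ∧ (M.length % 2 = 1 → cfA M y < cfA M x) := by
  induction M with
  | nil =>
    refine ⟨fun _ => hxy, fun hh => by simp at hh⟩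
  | cons m l ih =>
    have hm : (1:ℚ) ≤ m := by exact_mod_cast h m (by simp)
    have htail : ∀ a ∈ l, 0 < a := fun a ha => h a (by simp [ha])
    have hxn : 0 ≤ cfA l x := cfA_nonneg l htail hx
    have hyn : 0 ≤ cfA l y := cfA_nonneg l htail (le_trans hx hxy.le)
    have hdx : 0 < (m:ℚ) + cfA l x := by linarith
    have hdy : 0 < (m:ℚ) + cfA l y := by linarith
    obtain ⟨ih0, ih1⟩ := ih htail
    have hlen : (m :: l).length = l.length + 1 := rfl
    constructor
    · intro hp
      have hl : l.length % 2 = 1 := by omega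
      have := ih1 hl
      simp only [cfA]
      exact one_div_lt_one_div_of_lt hdy (by linarith)
    · intro hp
      have hl : l.length % 2 = 0 := by omega
      have := ih0 hl
      simp only [cfA]
      exact one_div_lt_one_div_of_lt hdx (by linarith)

lemma contFrac_pos (L : List ℕ) (hL : L ≠ []) (h : ∀ m ∈ L, 0 < m) : 0 < contFrac L := by
  cases L with
  | nil => exact absurd rfl hL
  | cons m l =>
    have hm : (1:ℚ) ≤ m := by exact_mod_cast h m (by simp)
    have h0 : 0 ≤ contFrac l := by
      rw [← cfA_zero]; exact cfA_nonneg l (fun a ha => h a (by simp [ha])) le_rfl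
    have : 0 < (m:ℚ) + contFrac l := by linarith
    simp only [contFrac]
    positivity

/-- with `r = [m₁,…,m_k] = contFrac (M ++ [mk])`, `k ≥ 2`, if the
continued fraction `[n₁,…,n_t]` of `s` satisfies `t ≥ k`, `nᵢ = mᵢ` for `i < k`, and
`n_k ≥ m_k` or (`n_k = m_k − 1` and `t > k`), then `s ∉ I₁(r) ∪ I₂(r)`, where
`I₁(r) = [0, r₁]`, `I₂(r) = [r₂, 1]` and `(r₁, r₂)` are as in the parity rule. -/
theorem not_in_I1_union_I2 (M : List ℕ) (mk : ℕ) (hM : M ≠ []) (hMpos : ∀ x ∈ M, 0 < x)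
    (hmk : 2 ≤ mk)
    (N : List ℕ) (hN : N ≠ []) (hNpos : ∀ x ∈ N, 0 < x)
    (hNlast : 1 < N.length → ∀ x ∈ N.getLast?, 2 ≤ x)
    (s : ℚ) (hs : s = contFrac N) (hs0 : 0 < s) (hs1 : s ≤ 1)
    (k : ℕ) (hk : k = M.length + 1)
    (ht : k ≤ N.length)
    (heq : ∀ i : ℕ, i + 1 < k → N.getD i 0 = (M ++ [mk]).getD i 0)
    (hlast : mk ≤ N.getD (k - 1) 0 ∨ (N.getD (k - 1) 0 = mk - 1 ∧ k < N.length)) :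
    s ∉ Set.Icc (0 : ℚ) (if k % 2 = 1 then contFrac M else contFrac (M ++ [mk - 1])) ∪
        Set.Icc (if k % 2 = 1 then contFrac (M ++ [mk - 1]) else contFrac M) 1 := by
  -- split N as M ++ L
  have hNtake : N.take M.length = M := by
    apply List.ext_getElem
    · simp; omega
    · intro i h1 h2
      have hiM : i < M.length := h2
      have := heq i (by omega)
      rw [List.getD_append _ _ _ _ hiM] at this
      have hiN : i < N.length := by omega
      rw [List.getD_eq_getElem _ _ hiN, List.getD_eq_getElem _ _ hiM] at this
      simpa using this
  have hsplit : M ++ N.drop M.length = N := by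
    conv_rhs => rw [← List.take_append_drop M.length N, hNtake]
  obtain ⟨n, L', hNL⟩ : ∃ n L', N.drop M.length = n :: L' := by
    cases hL : N.drop M.length with
    | nil =>
      exfalso
      have := congrArg List.length hL
      simp at this; omega
    | cons a b => exact ⟨a, b, rfl⟩
  rw [hNL] at hsplit
  have hLlen : (n :: L').length = N.length - M.length := by
    rw [← hNL]; simp
  -- identify n with N.getD (k-1) 0
  have hkM : k - 1 = M.length := by omega
  have hn : N.getD (k - 1) 0 = n := by
    rw [hkM, ← hsplit, List.getD_append_right _ _ _ _ le_rfl]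
    simp
  -- positivity facts
  have hLpos : ∀ x ∈ n :: L', 0 < x := by
    intro x hx; exact hNpos x (by rw [← hsplit]; simp [hx])
  have hL'pos : ∀ x ∈ L', 0 < x := fun x hx => hLpos x (by simp [hx])
  have hn1 : (1:ℚ) ≤ n := by exact_mod_cast hLpos n (by simp)
  have hL'0 : 0 ≤ contFrac L' := by
    rw [← cfA_zero]; exact cfA_nonneg L' hL'pos le_rfl
  have hLposQ : 0 < contFrac (n :: L') := contFrac_pos _ (by simp) hLpos
  -- the key bound: contFrac L < 1/(mk-1)
  have hmkQ : (0:ℚ) < (mk:ℚ) - 1 := by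
    have : (2:ℚ) ≤ mk := by exact_mod_cast hmk
    linarith
  have hden : (mk:ℚ) - 1 < n + contFrac L' := by
    rw [hn] at hlast
    rcases hlast with h | ⟨h, hklt⟩
    · have : (mk:ℚ) ≤ n := by exact_mod_cast h
      linarith
    · have hL'ne : L' ≠ [] := by
        have : (n :: L').length = N.length - M.length := hLlen
        simp at this
        intro hc; rw [hc] at this; simp at this; omega
      have hL'pos' : 0 < contFrac L' := contFrac_pos _ hL'ne hL'pos
      have : (n:ℚ) = (mk:ℚ) - 1 := by
        have : ((mk - 1 : ℕ) : ℚ) = (mk:ℚ) - 1 := by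
          push_cast [Nat.cast_sub (by omega : 1 ≤ mk)]; ring
        rw [← this]; exact_mod_cast congrArg (Nat.cast : ℕ → ℚ) h
      linarith
  have hkey : contFrac (n :: L') < 1 / ((mk:ℚ) - 1) := by
    show 1 / ((n:ℚ) + contFrac L') < 1 / ((mk:ℚ) - 1)
    exact one_div_lt_one_div_of_lt hmkQ hden
  -- express everything via cfA
  have hr2 : contFrac (M ++ [mk - 1]) = cfA M (1 / ((mk:ℚ) - 1)) := by
    rw [cfA_append]
    congr 1
    show 1 / (((mk - 1 : ℕ) : ℚ) + 0) = 1 / ((mk:ℚ) - 1)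
    rw [Nat.cast_sub (by omega : 1 ≤ mk)]
    norm_num
  have hsval : s = cfA M (contFrac (n :: L')) := by
    rw [hs, ← hsplit, cfA_append]
  have hr1 : contFrac M = cfA M 0 := (cfA_zero M).symm
  -- strict comparisons
  obtain ⟨hA0, hA1⟩ := cfA_lt M hMpos (le_refl (0:ℚ)) hLposQ
  obtain ⟨hB0, hB1⟩ := cfA_lt M hMpos hLposQ.le hkey
  simp only [Set.mem_union, Set.mem_Icc, not_or]
  push_neg
  by_cases hpar : k % 2 = 1
  · have hMeven : M.length % 2 = 0 := by omega
    simp only [hpar, if_pos]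
    have h1 : contFrac M < s := by rw [hr1, hsval]; exact hA0 hMeven
    have h2 : s < contFrac (M ++ [mk - 1]) := by rw [hr2, hsval]; exact hB0 hMeven
    exact ⟨fun _ => h1, fun h => absurd h (not_le.mpr h2)⟩
  · have hModd : M.length % 2 = 1 := by omega
    simp only [hpar, if_neg, if_false]
    have h1 : contFrac (M ++ [mk - 1]) < s := by rw [hr2, hsval]; exact hB1 hModd
    have h2 : s < contFrac M := by rw [hr1, hsval]; exact hA1 hModd
    exact ⟨fun _ => h1, fun h => absurd h (not_le.mpr h2)⟩
end

section
/- For r = 3/7, in the group G = ⟨a, b | u_{3/7}⟩ where u_{3/7} = a b a b^{-1} a^{-1} b a b^{-1} a^{-1} b^{-1} a b a^{-1} b^{-1}, let w = a b^2 a b^{-1} a^{-1} b^{-1}. Then w^2 = u_{2/7} in G, where u_{2/7} is the word associated to slope 2/7; in particular u_{2/7} is a square in G. -/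
/-- The relator `u_{3/7} = a b a b⁻¹ a⁻¹ b a b⁻¹ a⁻¹ b⁻¹ a b a⁻¹ b⁻¹` in `F(a,b)`,
with `a = FreeGroup.of true`, `b = FreeGroup.of false`. -/
def rel37 : FreeGroup Bool :=
  .of true * .of false * .of true * (.of false)⁻¹ * (.of true)⁻¹ * .of false *
    .of true * (.of false)⁻¹ * (.of true)⁻¹ * (.of false)⁻¹ *
    .of true * .of false * (.of true)⁻¹ * (.of false)⁻¹

/-- in `G = ⟨a, b | u_{3/7}⟩`, with `w = a b² a b⁻¹ a⁻¹ b⁻¹` one has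
`w² = u_{2/7}`, where `u_{2/7} = a b a b a⁻¹ b⁻¹ a⁻¹ b a b a b⁻¹ a⁻¹ b⁻¹` is the
word associated to the slope `2/7`; in particular `u_{2/7}` is a square in `G`. -/
theorem u27_is_square :
    ∀ (a b : PresentedGroup ({rel37} : Set (FreeGroup Bool))),
      a = PresentedGroup.of true → b = PresentedGroup.of false →
      (a * b * b * a * b⁻¹ * a⁻¹ * b⁻¹) ^ 2 =
        a * b * a * b * a⁻¹ * b⁻¹ * a⁻¹ * b * a * b * a * b⁻¹ * a⁻¹ * b⁻¹ := by
  rintro a b rfl rfl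
  set a : PresentedGroup ({rel37} : Set (FreeGroup Bool)) := PresentedGroup.of true with ha
  set b : PresentedGroup ({rel37} : Set (FreeGroup Bool)) := PresentedGroup.of false with hb
  have hr : a * b * a * b⁻¹ * a⁻¹ * b * a * b⁻¹ * a⁻¹ * b⁻¹ * a * b * a⁻¹ * b⁻¹ = 1 := by
    have h1 : PresentedGroup.mk {rel37} rel37 = 1 := by
      have : rel37 ∈ Subgroup.normalClosure ({rel37} : Set (FreeGroup Bool)) :=
        Subgroup.subset_normalClosure (Set.mem_singleton _)
      exact (QuotientGroup.eq_one_iff _).2 this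
    rw [← h1, ha, hb]
    simp only [PresentedGroup.of, ← map_mul, ← map_inv]
    rfl
  have key : (a * b * b * a * b⁻¹ * a⁻¹ * b⁻¹) ^ 2 =
      (a * b * a * b * a⁻¹ * b⁻¹ * a⁻¹) *
        (a * b * a * b⁻¹ * a⁻¹ * b * a * b⁻¹ * a⁻¹ * b⁻¹ * a * b * a⁻¹ * b⁻¹) *
        (a * b * a * b * a⁻¹ * b⁻¹ * a⁻¹)⁻¹ *
        (a * b * a * b * a⁻¹ * b⁻¹ * a⁻¹ * b * a * b * a * b⁻¹ * a⁻¹ * b⁻¹) := by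
    rw [sq]; group
  rw [key, hr]
  group
end
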